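/- arXiv:2001.07116 — 6 statements merged into one kernel-verified Lean document; each statement's English description precedes it below -/
import Mathlib

section
/- Fix an integer n ≥ 1 and a wave number k > 0. There exist constants C > 0 and R > 0 such that for every z ∈ ℂ with |z| ≥ R and |arg z| < π, |z·f_n^2(z) + ℋ_n(k)·cos(z − nπ/2 − π/2)| ≤ C e^{|Im z|}/|z|. -/
open Complex Real Filter

/-- Spherical Bessel function of the first kind of order `n`, as an entire function. -/
noncomputable def sphJ (n : ℕ) (z : ℂ) : ℂ :=
  ∑' m : ℕ, ((-1 : ℂ) ^ m * z ^ (n + 2 * m)) /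
    ((2 : ℂ) ^ m * (m.factorial : ℂ) * (Nat.doubleFactorial (2 * n + 2 * m + 1) : ℂ))

/-- Spherical Hankel function of the first kind of order `n` (for `z ≠ 0`). -/
noncomputable def sphH (n : ℕ) (z : ℂ) : ℂ :=
  (-Complex.I) ^ (n + 1) * Complex.exp (Complex.I * z) / z *
    ∑ m ∈ Finset.range (n + 1),
      (Complex.I ^ m * ((n + m).factorial : ℂ)) /
        ((m.factorial : ℂ) * (2 * z) ^ m * ((n - m).factorial : ℂ))

/-- `𝒥_n(z) = j_n(z) + z j_n'(z)`. -/
noncomputable def calJ (n : ℕ) (z : ℂ) : ℂ := sphJ n z + z * deriv (sphJ n) z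

/-- `ℋ_n(z) = h_n^{(1)}(z) + z (h_n^{(1)})'(z)`. -/
noncomputable def calH (n : ℕ) (z : ℂ) : ℂ := sphH n z + z * deriv (sphH n) z

/-- `f_n^1(z) = h_n^{(1)}(k) 𝒥_n(z) − j_n(z) ℋ_n(k)`. -/
noncomputable def f1 (n : ℕ) (k : ℝ) (z : ℂ) : ℂ :=
  sphH n (k : ℂ) * calJ n z - sphJ n z * calH n (k : ℂ)

/-- `f_n^2(z) = (k²/z²) h_n^{(1)}(k) 𝒥_n(z) − j_n(z) ℋ_n(k)`. -/
noncomputable def f2 (n : ℕ) (k : ℝ) (z : ℂ) : ℂ :=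
  ((k : ℂ) ^ 2 / z ^ 2) * sphH n (k : ℂ) * calJ n z - sphJ n z * calH n (k : ℂ)

/-- `z̃¹_{n,l} = (1 + 2l + n)π/2`. -/
noncomputable def zt1 (n l : ℕ) : ℂ := ((1 + 2 * l + n : ℕ) : ℂ) * (Real.pi : ℂ) / 2

/-- `z̃²_{n,l} = (2l + n)π/2`. -/
noncomputable def zt2 (n l : ℕ) : ℂ := ((2 * l + n : ℕ) : ℂ) * (Real.pi : ℂ) / 2

/-- `g_n(w) = 𝒥_n(w)/w`, extended through the removable singularity at `w = 0`. -/
noncomputable def gfun (n : ℕ) (w : ℂ) : ℂ :=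
  if w = 0 then deriv (calJ n) 0 else calJ n w / w

namespace SphAux

lemma denom_ne (n m : ℕ) :
    ((2:ℂ) ^ m * (m.factorial : ℂ) * ((Nat.doubleFactorial (2*n+2*m+1)) : ℂ)) ≠ 0 := by
  refine mul_ne_zero (mul_ne_zero (pow_ne_zero _ two_ne_zero) ?_) ?_ <;>
    exact_mod_cast Nat.cast_ne_zero.mpr (by positivity)

lemma summable_sphJ (n : ℕ) (z : ℂ) :
    Summable (fun m : ℕ => ((-1 : ℂ) ^ m * z ^ (n + 2 * m)) /
      ((2 : ℂ) ^ m * (m.factorial : ℂ) * (Nat.doubleFactorial (2 * n + 2 * m + 1) : ℂ))) := by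
  apply Summable.of_norm
  apply Summable.of_nonneg_of_le (fun m => norm_nonneg _) (fun m => ?_)
    ((Real.summable_pow_div_factorial ((‖z‖)^2)).mul_left ((‖z‖)^n))
  have hden : (0:ℝ) < 2 ^ m * (m.factorial : ℝ) * ((Nat.doubleFactorial (2*n+2*m+1)) : ℝ) := by
    positivity
  have h1 : ‖((-1 : ℂ) ^ m * z ^ (n + 2 * m)) /
      ((2 : ℂ) ^ m * (m.factorial : ℂ) * (Nat.doubleFactorial (2 * n + 2 * m + 1) : ℂ))‖
      = (‖z‖) ^ (n + 2*m) /
        (2 ^ m * (m.factorial : ℝ) * ((Nat.doubleFactorial (2*n+2*m+1)) : ℝ)) := by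
    simp [norm_div, norm_mul, norm_pow, Complex.norm_natCast]
  rw [h1]
  have h2 : (‖z‖) ^ (n + 2*m) = (‖z‖)^n * ((‖z‖)^2)^m := by
    rw [← pow_mul, ← pow_add]
  rw [h2, mul_div_assoc]
  refine mul_le_mul_of_nonneg_left ?_ (by positivity)
  apply div_le_div_of_nonneg_left (by positivity) (by positivity)
  calc (m.factorial : ℝ) = 1 * (m.factorial : ℝ) * 1 := by ring
  _ ≤ 2 ^ m * (m.factorial : ℝ) * ((Nat.doubleFactorial (2*n+2*m+1)) : ℝ) := by
      refine mul_le_mul (mul_le_mul ?_ le_rfl (by positivity) (by positivity)) ?_ zero_le_one (by positivity)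
      · exact one_le_pow₀ one_le_two
      · exact_mod_cast Nat.one_le_iff_ne_zero.mpr (Nat.doubleFactorial_pos _).ne'

lemma hasSum_sphJ (n : ℕ) (z : ℂ) :
    HasSum (fun m : ℕ => ((-1 : ℂ) ^ m * z ^ (n + 2 * m)) /
      ((2 : ℂ) ^ m * (m.factorial : ℂ) * (Nat.doubleFactorial (2 * n + 2 * m + 1) : ℂ)))
      (sphJ n z) := (summable_sphJ n z).hasSum


lemma fact_den (m : ℕ) :
    2 ^ m * m.factorial * Nat.doubleFactorial (2*m+1) = Nat.factorial (2*m+1) := by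
  have h1 := Nat.factorial_eq_mul_doubleFactorial (2*m)
  have h2 := Nat.doubleFactorial_two_mul m
  rw [h1, h2]; ring

lemma sphJ_zero (z : ℂ) : z * sphJ 0 z = Complex.sin z := by
  have h := (hasSum_sphJ 0 z).mul_left z
  have he : (fun m : ℕ => z * (((-1 : ℂ) ^ m * z ^ (0 + 2 * m)) /
      ((2 : ℂ) ^ m * (m.factorial : ℂ) * (Nat.doubleFactorial (2 * 0 + 2 * m + 1) : ℂ))))
      = fun m : ℕ => (-1 : ℂ) ^ m * z ^ (2 * m + 1) / ((2 * m + 1).factorial : ℂ) := by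
    funext m
    have : ((2:ℂ) ^ m * (m.factorial : ℂ) * (Nat.doubleFactorial (2 * 0 + 2 * m + 1) : ℂ))
        = (((2*m+1).factorial : ℕ) : ℂ) := by
      push_cast [← fact_den m]; ring_nf
    rw [this]
    rw [zero_add, pow_succ']
    ring
  rw [he] at h
  exact h.unique (Complex.hasSum_sin z)

lemma sphJ_one (z : ℂ) : z^2 * sphJ 1 z = Complex.sin z - z * Complex.cos z := by
  have hs := Complex.hasSum_sin z
  have hc := (Complex.hasSum_cos z).mul_left z
  have hd := hs.sub hc
  have hshift := (hasSum_nat_add_iff' (f := fun m : ℕ =>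
      (-1:ℂ) ^ m * z ^ (2 * m + 1) / ((2 * m + 1).factorial : ℂ)
      - z * ((-1:ℂ) ^ m * z ^ (2 * m) / ((2 * m).factorial : ℂ))) 1).mpr hd
  have h2 := (hasSum_sphJ 1 z).mul_left (z^2)
  have he : (fun m : ℕ => z^2 * (((-1 : ℂ) ^ m * z ^ (1 + 2 * m)) /
      ((2 : ℂ) ^ m * (m.factorial : ℂ) * (Nat.doubleFactorial (2 * 1 + 2 * m + 1) : ℂ))))
      = fun m : ℕ =>
      (-1:ℂ) ^ (m+1) * z ^ (2 * (m+1) + 1) / ((2 * (m+1) + 1).factorial : ℂ)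
      - z * ((-1:ℂ) ^ (m+1) * z ^ (2 * (m+1)) / ((2 * (m+1)).factorial : ℂ)) := by
    funext m
    simp only [show 2*(m+1)+1 = 2*m+3 from by ring, show 2*(m+1) = 2*m+2 from by ring,
      show 2*1+2*m+1 = 2*m+3 from by ring]
    set D : ℂ := (2 : ℂ) ^ m * (m.factorial : ℂ) * (Nat.doubleFactorial (2*m+3) : ℂ) with hD
    have hDne : D ≠ 0 := by
      rw [hD]
      refine mul_ne_zero (mul_ne_zero (pow_ne_zero _ two_ne_zero) ?_) ?_ <;>
        exact Nat.cast_ne_zero.mpr (by positivity)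
    have hF3ne : (((2*m+3).factorial : ℕ) : ℂ) ≠ 0 := Nat.cast_ne_zero.mpr (Nat.factorial_pos _).ne'
    have hF2ne : (((2*m+2).factorial : ℕ) : ℂ) ≠ 0 := Nat.cast_ne_zero.mpr (Nat.factorial_pos _).ne'
    have hr1 : (((2*m+3).factorial : ℕ) : ℂ) = (2*(m:ℂ)+3) * ((2*m+2).factorial : ℕ) := by
      have : (2*m+3).factorial = (2*m+3) * (2*m+2).factorial := by
        rw [show 2*m+3 = (2*m+2)+1 from by ring, Nat.factorial_succ]
      rw [this]; push_cast; ring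
    have hr2 : (((2*m+3).factorial : ℕ) : ℂ) = 2*((m:ℂ)+1) * D := by
      have hk := fact_den (m+1)
      rw [show 2*(m+1)+1 = 2*m+3 from by ring] at hk
      rw [← hk, hD, Nat.factorial_succ]
      push_cast; ring
    have hkey : (1:ℂ)/D = 1/((2*m+2).factorial : ℕ) - 1/((2*m+3).factorial : ℕ) := by
      field_simp
      linear_combination (((2*m+2).factorial : ℕ) : ℂ) * hr2 - D * hr1
    have : z^2 * (((-1 : ℂ) ^ m * z ^ (1 + 2 * m)) / D)
        = (-1:ℂ)^m * z^(2*m+3) * ((1:ℂ)/D) := by ring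
    rw [this, hkey]
    ring
  rw [he] at h2
  have h3 := h2.unique hshift
  rw [h3]
  norm_num


lemma dfac_cast_ne (j : ℕ) : ((Nat.doubleFactorial j : ℕ) : ℂ) ≠ 0 :=
  Nat.cast_ne_zero.mpr (Nat.doubleFactorial_pos _).ne'

lemma sphJ_rec (n : ℕ) (z : ℂ) :
    z * sphJ (n+2) z + z * sphJ n z = (2*(n:ℂ)+3) * sphJ (n+1) z := by
  set term : ℕ → ℕ → ℂ := fun q m => ((-1 : ℂ) ^ m * z ^ (q + 2 * m)) /
    ((2 : ℂ) ^ m * (m.factorial : ℂ) * (Nat.doubleFactorial (2 * q + 2 * m + 1) : ℂ)) with hterm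
  have h2 : HasSum (fun m => z * term (n+2) m) (z * sphJ (n+2) z) :=
    (hasSum_sphJ (n+2) z).mul_left z
  set t : ℕ → ℂ := fun m => match m with
    | 0 => 0
    | (l+1) => z * term (n+2) l with ht
  have ht2 : HasSum t (z * sphJ (n+2) z + ∑ i ∈ Finset.range 1, t i) :=
    (hasSum_nat_add_iff (f := t) 1).mp h2
  have hts : (∑ i ∈ Finset.range 1, t i) = 0 := by simp [ht]
  rw [hts, add_zero] at ht2
  have hn0 : HasSum (fun m => z * term n m) (z * sphJ n z) :=
    (hasSum_sphJ n z).mul_left z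
  have hsum := ht2.add hn0
  have he : (fun m => t m + z * term n m)
      = fun m => (2*(n:ℂ)+3) * term (n+1) m := by
    funext m
    match m with
    | 0 =>
      have ht0 : t 0 = 0 := rfl
      have e1 : term n 0 = z^n / (Nat.doubleFactorial (2*n+1) : ℂ) := by
        rw [hterm]
        simp only [pow_zero, Nat.mul_zero, Nat.add_zero, add_zero, Nat.factorial_zero,
          Nat.cast_one, one_mul, mul_one]
      have e2 : term (n+1) 0 = z^(n+1) / (Nat.doubleFactorial (2*(n+1)+1) : ℂ) := by
        rw [hterm]
        simp only [pow_zero, Nat.mul_zero, Nat.add_zero, add_zero, Nat.factorial_zero,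
          Nat.cast_one, one_mul, mul_one]
      have hdf : ((Nat.doubleFactorial (2*(n+1)+1) : ℕ) : ℂ)
          = (2*(n:ℂ)+3) * ((Nat.doubleFactorial (2*n+1) : ℕ) : ℂ) := by
        rw [show 2*(n+1)+1 = (2*n+1)+2 from by ring, Nat.doubleFactorial_add_two]
        push_cast; ring
      have h23 : (2*(n:ℂ)+3) ≠ 0 := by
        have : (2*(n:ℂ)+3) = ((2*n+3 : ℕ) : ℂ) := by push_cast; ring
        rw [this]
        exact Nat.cast_ne_zero.mpr (by omega)
      rw [ht0, zero_add, e1, e2, hdf, ← mul_div_assoc, ← mul_div_assoc,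
        div_eq_div_iff (dfac_cast_ne _) (mul_ne_zero h23 (dfac_cast_ne _))]
      ring
    | (l+1) =>
      simp only [ht, hterm]
      simp only [show 2*(n+2)+2*l+1 = 2*n+2*l+5 from by ring,
        show 2*n+2*(l+1)+1 = 2*n+2*l+3 from by ring,
        show 2*(n+1)+2*(l+1)+1 = 2*n+2*l+5 from by ring]
      set D1 : ℂ := (2:ℂ)^l * (l.factorial : ℂ) * (Nat.doubleFactorial (2*n+2*l+5) : ℂ) with hD1
      set D2 : ℂ := (2:ℂ)^(l+1) * ((l+1).factorial : ℂ) * (Nat.doubleFactorial (2*n+2*l+3) : ℂ) with hD2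
      set D3 : ℂ := (2:ℂ)^(l+1) * ((l+1).factorial : ℂ) * (Nat.doubleFactorial (2*n+2*l+5) : ℂ) with hD3
      have hD1ne : D1 ≠ 0 := by
        rw [hD1]
        exact mul_ne_zero (mul_ne_zero (pow_ne_zero _ two_ne_zero)
          (Nat.cast_ne_zero.mpr (Nat.factorial_pos _).ne')) (dfac_cast_ne _)
      have hD2ne : D2 ≠ 0 := by
        rw [hD2]
        exact mul_ne_zero (mul_ne_zero (pow_ne_zero _ two_ne_zero)
          (Nat.cast_ne_zero.mpr (Nat.factorial_pos _).ne')) (dfac_cast_ne _)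
      have hD3ne : D3 ≠ 0 := by
        rw [hD3]
        exact mul_ne_zero (mul_ne_zero (pow_ne_zero _ two_ne_zero)
          (Nat.cast_ne_zero.mpr (Nat.factorial_pos _).ne')) (dfac_cast_ne _)
      have hr1 : D3 = 2*((l:ℂ)+1) * D1 := by
        rw [hD3, hD1, Nat.factorial_succ]; push_cast; ring
      have hr2 : D3 = (2*(n:ℂ)+2*l+5) * D2 := by
        rw [hD3, hD2, show 2*n+2*l+5 = (2*n+2*l+3)+2 from by ring,
          Nat.doubleFactorial_add_two]
        push_cast; ring
      have hkey : (1:ℂ)/D2 - 1/D1 = (2*(n:ℂ)+3)/D3 := by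
        rw [div_sub_div _ _ hD2ne hD1ne, div_eq_div_iff (mul_ne_zero hD2ne hD1ne) hD3ne]
        linear_combination D1 * hr2 - D2 * hr1
      linear_combination (-(-1:ℂ)^l * z^(n+3+2*l)) * hkey
  rw [he] at hsum
  exact hsum.unique (((hasSum_sphJ (n+1) z)).mul_left _)


open Polynomial

def Psi (n : ℕ) : Prop := ∃ a b : Polynomial ℂ,
    (∀ z : ℂ, z ≠ 0 → sphJ n z = a.eval z⁻¹ * Complex.sin z + b.eval z⁻¹ * Complex.cos z) ∧
    a.coeff 0 = 0 ∧ b.coeff 0 = 0 ∧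
    a.coeff 1 = Complex.sin (((n:ℂ)+1) * (Real.pi:ℂ) / 2) ∧
    b.coeff 1 = Complex.cos (((n:ℂ)+1) * (Real.pi:ℂ) / 2)

lemma psi0 : Psi 0 := by
  refine ⟨X, 0, fun z hz => ?_, by simp, by simp, by simp, by simp⟩
  have h : sphJ 0 z = Complex.sin z / z := by
    rw [eq_div_iff hz]; linear_combination sphJ_zero z
  rw [h]
  simp only [eval_X, eval_zero, zero_mul, add_zero]
  rw [div_eq_mul_inv]; ring

lemma psi1 : Psi 1 := by
  refine ⟨X^2, -X, fun z hz => ?_, by simp, by simp, ?_, ?_⟩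
  · have hz2 : z^2 ≠ 0 := pow_ne_zero _ hz
    have h : sphJ 1 z = (Complex.sin z - z * Complex.cos z) / z^2 := by
      rw [eq_div_iff hz2]; linear_combination sphJ_one z
    rw [h]
    simp only [eval_pow, eval_X, eval_neg]
    rw [div_eq_mul_inv]
    field_simp
    ring
  · have harg : (((1:ℕ):ℂ)+1) * (Real.pi:ℂ) / 2 = ((Real.pi : ℝ) : ℂ) := by push_cast; ring
    rw [harg, ← Complex.ofReal_sin, Real.sin_pi]
    simp
  · have harg : (((1:ℕ):ℂ)+1) * (Real.pi:ℂ) / 2 = ((Real.pi : ℝ) : ℂ) := by push_cast; ring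
    rw [harg, ← Complex.ofReal_cos, Real.cos_pi]
    simp

lemma psi_step (n : ℕ) (h0 : Psi n) (h1 : Psi (n+1)) : Psi (n+2) := by
  obtain ⟨a0, b0, hf0, ha00, hb00, ha01, hb01⟩ := h0
  obtain ⟨a1, b1, hf1, ha10, hb10, ha11, hb11⟩ := h1
  refine ⟨C (2*(n:ℂ)+3) * X * a1 - a0, C (2*(n:ℂ)+3) * X * b1 - b0, fun z hz => ?_, ?_, ?_, ?_, ?_⟩
  · have hr := sphJ_rec n z
    have h : sphJ (n+2) z = ((2*(n:ℂ)+3) * sphJ (n+1) z - z * sphJ n z) / z := by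
      rw [eq_div_iff hz]; linear_combination hr
    rw [h, hf1 z hz, hf0 z hz]
    simp only [eval_sub, eval_mul, eval_C, eval_X]
    rw [div_eq_mul_inv]
    field_simp
    ring
  · simp [mul_coeff_zero, coeff_X_zero, ha00]
  · simp [mul_coeff_zero, coeff_X_zero, hb00]
  · have : (C (2*(n:ℂ)+3) * X * a1 - a0).coeff 1 = (2*(n:ℂ)+3) * a1.coeff 0 - a0.coeff 1 := by
      rw [coeff_sub, mul_assoc, coeff_C_mul, coeff_X_mul]
    rw [this, ha10, ha01]
    have harg : (((n+2:ℕ):ℂ)+1) * (Real.pi:ℂ) / 2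
        = (((n:ℕ):ℂ)+1) * (Real.pi:ℂ) / 2 + ((Real.pi:ℝ):ℂ) := by push_cast; ring
    rw [harg, Complex.sin_add, ← Complex.ofReal_sin, ← Complex.ofReal_cos,
      Real.sin_pi, Real.cos_pi]
    simp
  · have : (C (2*(n:ℂ)+3) * X * b1 - b0).coeff 1 = (2*(n:ℂ)+3) * b1.coeff 0 - b0.coeff 1 := by
      rw [coeff_sub, mul_assoc, coeff_C_mul, coeff_X_mul]
    rw [this, hb10, hb01]
    have harg : (((n+2:ℕ):ℂ)+1) * (Real.pi:ℂ) / 2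
        = (((n:ℕ):ℂ)+1) * (Real.pi:ℂ) / 2 + ((Real.pi:ℝ):ℂ) := by push_cast; ring
    rw [harg, Complex.cos_add, ← Complex.ofReal_sin, ← Complex.ofReal_cos,
      Real.sin_pi, Real.cos_pi]
    simp

lemma closed_form : ∀ n : ℕ, Psi n := by
  have key : ∀ n, Psi n ∧ Psi (n+1) := by
    intro n
    induction n with
    | zero => exact ⟨psi0, psi1⟩
    | succ k ih => exact ⟨ih.2, psi_step k ih.1 ih.2⟩
  exact fun n => (key n).1


lemma poly_bound (p : Polynomial ℂ) :
    ∃ M : ℝ, 0 ≤ M ∧ ∀ w : ℂ, ‖w‖ ≤ 1 → ‖p.eval w‖ ≤ M := by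
  refine ⟨∑ i ∈ Finset.range (p.natDegree + 1), ‖p.coeff i‖,
    Finset.sum_nonneg fun _ _ => norm_nonneg _, fun w hw => ?_⟩
  rw [Polynomial.eval_eq_sum_range]
  refine le_trans (norm_sum_le _ _) (Finset.sum_le_sum fun i _ => ?_)
  rw [norm_mul, norm_pow]
  calc ‖p.coeff i‖ * ‖w‖ ^ i
      ≤ ‖p.coeff i‖ * 1 :=
        mul_le_mul_of_nonneg_left (pow_le_one₀ (norm_nonneg _) hw)
          (norm_nonneg _)
    _ = ‖p.coeff i‖ := mul_one _

lemma abs_sin_le (z : ℂ) : ‖Complex.sin z‖ ≤ Real.exp |z.im| := by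
  rw [Complex.sin]
  rw [norm_div, norm_mul, Complex.norm_I, mul_one, Complex.norm_two]
  have h1 : ‖Complex.exp (-z * Complex.I) - Complex.exp (z * Complex.I)‖
      ≤ Real.exp z.im + Real.exp (-z.im) := by
    refine le_trans (by simpa [sub_eq_add_neg] using
                        norm_add_le (Complex.exp (-z * Complex.I)) (-Complex.exp (z * Complex.I))) ?_
    rw [Complex.norm_exp, Complex.norm_exp]
    simp
  have h2 : Real.exp z.im + Real.exp (-z.im) ≤ 2 * Real.exp |z.im| := by
    have := Real.exp_le_exp.mpr (le_abs_self z.im)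
    have := Real.exp_le_exp.mpr (neg_le_abs z.im)
    linarith
  calc ‖Complex.exp (-z * Complex.I) - Complex.exp (z * Complex.I)‖ / 2
      ≤ (2 * Real.exp |z.im|) / 2 := by gcongr; linarith
    _ = Real.exp |z.im| := by ring

lemma abs_cos_le (z : ℂ) : ‖Complex.cos z‖ ≤ Real.exp |z.im| := by
  rw [Complex.cos, norm_div, Complex.norm_two]
  have h1 : ‖Complex.exp (z * Complex.I) + Complex.exp (-z * Complex.I)‖
      ≤ Real.exp z.im + Real.exp (-z.im) := by
    refine le_trans (norm_add_le _ _) ?_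
    rw [Complex.norm_exp, Complex.norm_exp]
    simp [add_comm]
  have h2 : Real.exp z.im + Real.exp (-z.im) ≤ 2 * Real.exp |z.im| := by
    have := Real.exp_le_exp.mpr (le_abs_self z.im)
    have := Real.exp_le_exp.mpr (neg_le_abs z.im)
    linarith
  calc ‖Complex.exp (z * Complex.I) + Complex.exp (-z * Complex.I)‖ / 2
      ≤ (2 * Real.exp |z.im|) / 2 := by gcongr; linarith
    _ = Real.exp |z.im| := by ring

lemma eval_divX_eq (p : Polynomial ℂ) (w : ℂ) :
    p.eval w = p.divX.eval w * w + p.coeff 0 := by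
  conv_lhs => rw [← Polynomial.divX_mul_X_add p]
  simp


lemma tri_sub (x y : ℂ) : ‖x - y‖ ≤ ‖x‖ + ‖y‖ := by
  simpa [sub_eq_add_neg] using norm_add_le x (-y)

lemma calJ_bound (n : ℕ) (a b : Polynomial ℂ)
    (hf : ∀ z : ℂ, z ≠ 0 → sphJ n z = a.eval z⁻¹ * Complex.sin z + b.eval z⁻¹ * Complex.cos z)
    (ha0 : a.coeff 0 = 0) (hb0 : b.coeff 0 = 0) :
    ∃ CJ : ℝ, 0 ≤ CJ ∧ ∀ z : ℂ, 1 ≤ ‖z‖ →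
      ‖calJ n z‖ ≤ CJ * Real.exp |z.im| := by
  obtain ⟨Ma, hMa0, hMa⟩ := poly_bound a
  obtain ⟨Mb, hMb0, hMb⟩ := poly_bound b
  obtain ⟨Mpa, hMpa0, hMpa⟩ := poly_bound a.derivative
  obtain ⟨Mpb, hMpb0, hMpb⟩ := poly_bound b.derivative
  obtain ⟨Mda, hMda0, hMda⟩ := poly_bound a.divX
  obtain ⟨Mdb, hMdb0, hMdb⟩ := poly_bound b.divX
  refine ⟨Ma + Mb + Mpa + Mpb + Mda + Mdb, by positivity, fun z hz1 => ?_⟩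
  have hz : z ≠ 0 := by
    intro h
    rw [h] at hz1
    simp at hz1
    linarith
  have hw : ‖z⁻¹‖ ≤ 1 := by
    rw [norm_inv]; exact inv_le_one_of_one_le₀ hz1
  have h1 : HasDerivAt (fun w : ℂ => a.eval w⁻¹) (a.derivative.eval z⁻¹ * (-(z^2)⁻¹)) z :=
    HasDerivAt.comp z (Polynomial.hasDerivAt a z⁻¹) (hasDerivAt_inv hz)
  have h2 : HasDerivAt (fun w : ℂ => b.eval w⁻¹) (b.derivative.eval z⁻¹ * (-(z^2)⁻¹)) z :=
    HasDerivAt.comp z (Polynomial.hasDerivAt b z⁻¹) (hasDerivAt_inv hz)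
  have hF : HasDerivAt (fun w : ℂ => a.eval w⁻¹ * Complex.sin w + b.eval w⁻¹ * Complex.cos w)
      ((a.derivative.eval z⁻¹ * (-(z^2)⁻¹)) * Complex.sin z + a.eval z⁻¹ * Complex.cos z +
       ((b.derivative.eval z⁻¹ * (-(z^2)⁻¹)) * Complex.cos z + b.eval z⁻¹ * (-Complex.sin z))) z :=
    (h1.mul (Complex.hasDerivAt_sin z)).add (h2.mul (Complex.hasDerivAt_cos z))
  have heq : sphJ n =ᶠ[nhds z] fun w => a.eval w⁻¹ * Complex.sin w + b.eval w⁻¹ * Complex.cos w := by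
    filter_upwards [isOpen_compl_singleton.mem_nhds (by simpa using hz)] with w hw2
    exact hf w (by simpa using hw2)
  have hderiv : deriv (sphJ n) z
      = (a.derivative.eval z⁻¹ * (-(z^2)⁻¹)) * Complex.sin z + a.eval z⁻¹ * Complex.cos z +
        ((b.derivative.eval z⁻¹ * (-(z^2)⁻¹)) * Complex.cos z + b.eval z⁻¹ * (-Complex.sin z)) := by
    rw [heq.deriv_eq]; exact hF.deriv
  have ea : a.eval z⁻¹ = a.divX.eval z⁻¹ * z⁻¹ := by rw [eval_divX_eq a z⁻¹, ha0, add_zero]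
  have eb : b.eval z⁻¹ = b.divX.eval z⁻¹ * z⁻¹ := by rw [eval_divX_eq b z⁻¹, hb0, add_zero]
  have hcal : calJ n z
      = (a.eval z⁻¹ - a.derivative.eval z⁻¹ * z⁻¹ - b.divX.eval z⁻¹) * Complex.sin z
        + (b.eval z⁻¹ - b.derivative.eval z⁻¹ * z⁻¹ + a.divX.eval z⁻¹) * Complex.cos z := by
    unfold calJ
    rw [hderiv, hf z hz]
    rw [ea, eb]
    field_simp
    ring
  rw [hcal]
  have bs := abs_sin_le z
  have bc := abs_cos_le z
  have c1 : ‖a.eval z⁻¹ - a.derivative.eval z⁻¹ * z⁻¹ - b.divX.eval z⁻¹‖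
      ≤ Ma + Mpa + Mdb := by
    refine le_trans (tri_sub _ _) ?_
    have := tri_sub (a.eval z⁻¹) (a.derivative.eval z⁻¹ * z⁻¹)
    have h3 : ‖a.derivative.eval z⁻¹ * z⁻¹‖ ≤ Mpa := by
      rw [norm_mul]
      calc ‖a.derivative.eval z⁻¹‖ * ‖z⁻¹‖
          ≤ Mpa * 1 := mul_le_mul (hMpa _ hw) hw (norm_nonneg _) hMpa0
        _ = Mpa := mul_one _
    have := hMa _ hw
    have := hMdb _ hw
    linarith
  have c2 : ‖b.eval z⁻¹ - b.derivative.eval z⁻¹ * z⁻¹ + a.divX.eval z⁻¹‖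
      ≤ Mb + Mpb + Mda := by
    refine le_trans (norm_add_le _ _) ?_
    have := tri_sub (b.eval z⁻¹) (b.derivative.eval z⁻¹ * z⁻¹)
    have h3 : ‖b.derivative.eval z⁻¹ * z⁻¹‖ ≤ Mpb := by
      rw [norm_mul]
      calc ‖b.derivative.eval z⁻¹‖ * ‖z⁻¹‖
          ≤ Mpb * 1 := mul_le_mul (hMpb _ hw) hw (norm_nonneg _) hMpb0
        _ = Mpb := mul_one _
    have := hMb _ hw
    have := hMda _ hw
    linarith
  calc ‖(a.eval z⁻¹ - a.derivative.eval z⁻¹ * z⁻¹ - b.divX.eval z⁻¹) * Complex.sin z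
        + (b.eval z⁻¹ - b.derivative.eval z⁻¹ * z⁻¹ + a.divX.eval z⁻¹) * Complex.cos z‖
      ≤ (Ma + Mpa + Mdb) * Real.exp |z.im| + (Mb + Mpb + Mda) * Real.exp |z.im| := by
        refine le_trans (norm_add_le _ _) ?_
        rw [norm_mul, norm_mul]
        have e0 : (0:ℝ) ≤ Real.exp |z.im| := (Real.exp_pos _).le
        have := mul_le_mul c1 bs (norm_nonneg _) (by positivity)
        have := mul_le_mul c2 bc (norm_nonneg _) (by positivity)
        linarith
    _ = (Ma + Mb + Mpa + Mpb + Mda + Mdb) * Real.exp |z.im| := by ring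

lemma err_bound (n : ℕ) (a b : Polynomial ℂ)
    (hf : ∀ z : ℂ, z ≠ 0 → sphJ n z = a.eval z⁻¹ * Complex.sin z + b.eval z⁻¹ * Complex.cos z)
    (ha0 : a.coeff 0 = 0) (hb0 : b.coeff 0 = 0) :
    ∃ CE : ℝ, 0 ≤ CE ∧ ∀ z : ℂ, 1 ≤ ‖z‖ →
      ‖z * sphJ n z - (Complex.sin z * a.coeff 1 + Complex.cos z * b.coeff 1)‖
        ≤ CE * Real.exp |z.im| / ‖z‖ := by
  obtain ⟨M1, hM10, hM1⟩ := poly_bound a.divX.divX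
  obtain ⟨M2, hM20, hM2⟩ := poly_bound b.divX.divX
  refine ⟨M1 + M2, by positivity, fun z hz1 => ?_⟩
  have hz : z ≠ 0 := by
    intro h
    rw [h] at hz1
    simp at hz1
    linarith
  have hw : ‖z⁻¹‖ ≤ 1 := by
    rw [norm_inv]; exact inv_le_one_of_one_le₀ hz1
  have ea : a.eval z⁻¹ = a.divX.eval z⁻¹ * z⁻¹ := by rw [eval_divX_eq a z⁻¹, ha0, add_zero]
  have eb : b.eval z⁻¹ = b.divX.eval z⁻¹ * z⁻¹ := by rw [eval_divX_eq b z⁻¹, hb0, add_zero]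
  have eda : a.divX.eval z⁻¹ = a.divX.divX.eval z⁻¹ * z⁻¹ + a.coeff 1 := by
    rw [eval_divX_eq a.divX z⁻¹, Polynomial.coeff_divX]
  have edb : b.divX.eval z⁻¹ = b.divX.divX.eval z⁻¹ * z⁻¹ + b.coeff 1 := by
    rw [eval_divX_eq b.divX z⁻¹, Polynomial.coeff_divX]
  have key : z * sphJ n z - (Complex.sin z * a.coeff 1 + Complex.cos z * b.coeff 1)
      = z⁻¹ * (a.divX.divX.eval z⁻¹ * Complex.sin z + b.divX.divX.eval z⁻¹ * Complex.cos z) := by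
    rw [hf z hz, ea, eb, eda, edb]
    field_simp
    ring
  rw [key, norm_mul, norm_inv]
  have bs := abs_sin_le z
  have bc := abs_cos_le z
  have hzpos : (0:ℝ) < ‖z‖ := lt_of_lt_of_le one_pos hz1
  have hmain : ‖a.divX.divX.eval z⁻¹ * Complex.sin z
      + b.divX.divX.eval z⁻¹ * Complex.cos z‖ ≤ (M1 + M2) * Real.exp |z.im| := by
    refine le_trans (norm_add_le _ _) ?_
    rw [norm_mul, norm_mul]
    have e0 : (0:ℝ) ≤ Real.exp |z.im| := (Real.exp_pos _).le
    have := mul_le_mul (hM1 _ hw) bs (norm_nonneg _) hM10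
    have := mul_le_mul (hM2 _ hw) bc (norm_nonneg _) hM20
    linarith
  rw [inv_mul_eq_div, div_le_div_iff₀ hzpos hzpos]
  calc ‖a.divX.divX.eval z⁻¹ * Complex.sin z
        + b.divX.divX.eval z⁻¹ * Complex.cos z‖ * ‖z‖
      ≤ ((M1 + M2) * Real.exp |z.im|) * ‖z‖ := by
        exact mul_le_mul_of_nonneg_right hmain (norm_nonneg _)
    _ = (M1 + M2) * Real.exp |z.im| * ‖z‖ := by ring


end SphAux

/-- asymptotics of `z f_n^2(z)` for large `|z|` with `|arg z| < π`. -/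
theorem stmt2 (n : ℕ) (hn : 1 ≤ n) (k : ℝ) (hk : 0 < k) :
    ∃ C > (0 : ℝ), ∃ R > (0 : ℝ), ∀ z : ℂ, R ≤ ‖z‖ → |Complex.arg z| < Real.pi →
      ‖z * f2 n k z +
          calH n (k : ℂ) * Complex.cos (z - (n : ℂ) * (Real.pi : ℂ) / 2 - (Real.pi : ℂ) / 2)‖ ≤
        C * Real.exp |z.im| / ‖z‖ := by
  obtain ⟨a, b, hf, ha0, hb0, ha1, hb1⟩ := SphAux.closed_form n
  obtain ⟨CJ, hCJ0, hCJ⟩ := SphAux.calJ_bound n a b hf ha0 hb0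
  obtain ⟨CE, hCE0, hCE⟩ := SphAux.err_bound n a b hf ha0 hb0
  have hH0 : (0:ℝ) ≤ ‖sphH n (k:ℂ)‖ := norm_nonneg _
  have hB0 : (0:ℝ) ≤ ‖calH n (k:ℂ)‖ := norm_nonneg _
  have hCpos : (0:ℝ) < k^2 * ‖sphH n (k:ℂ)‖ * CJ + ‖calH n (k:ℂ)‖ * CE + 1 := by
    have h1 : (0:ℝ) ≤ k^2 * ‖sphH n (k:ℂ)‖ * CJ :=
      mul_nonneg (mul_nonneg (sq_nonneg _) hH0) hCJ0
    have h2 : (0:ℝ) ≤ ‖calH n (k:ℂ)‖ * CE := mul_nonneg hB0 hCE0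
    linarith
  refine ⟨_, hCpos, 1, one_pos, fun z hz1 _ => ?_⟩
  have hzpos : (0:ℝ) < ‖z‖ := lt_of_lt_of_le one_pos hz1
  have hz : z ≠ 0 := by
    intro h; rw [h] at hzpos; simp at hzpos
  have he0 : (0:ℝ) ≤ Real.exp |z.im| := (Real.exp_pos _).le
  have hcosT : Complex.cos (z - (n:ℂ) * (Real.pi:ℂ) / 2 - (Real.pi:ℂ) / 2)
      = Complex.sin z * a.coeff 1 + Complex.cos z * b.coeff 1 := by
    rw [ha1, hb1,
      show z - (n:ℂ) * (Real.pi:ℂ) / 2 - (Real.pi:ℂ) / 2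
        = z - ((n:ℂ)+1) * (Real.pi:ℂ) / 2 from by ring,
      Complex.cos_sub]
    ring
  have split : z * f2 n k z +
      calH n (k:ℂ) * Complex.cos (z - (n:ℂ) * (Real.pi:ℂ) / 2 - (Real.pi:ℂ) / 2)
      = ((k:ℂ)^2 * sphH n (k:ℂ) / z) * calJ n z
        - calH n (k:ℂ) *
          (z * sphJ n z - (Complex.sin z * a.coeff 1 + Complex.cos z * b.coeff 1)) := by
    rw [hcosT]
    unfold f2
    field_simp
    ring
  rw [split]
  have t1 : ‖((k:ℂ)^2 * sphH n (k:ℂ) / z) * calJ n z‖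
      ≤ (k^2 * ‖sphH n (k:ℂ)‖ * CJ) * Real.exp |z.im| / ‖z‖ := by
    rw [norm_mul, norm_div, norm_mul, norm_pow, Complex.norm_real, Real.norm_eq_abs, abs_of_pos hk,
      div_mul_eq_mul_div, div_le_div_iff₀ hzpos hzpos]
    have := mul_le_mul_of_nonneg_left (hCJ z hz1)
      (mul_nonneg (sq_nonneg k) hH0)
    calc k ^ 2 * ‖sphH n (k:ℂ)‖ * ‖calJ n z‖ * ‖z‖
        ≤ k ^ 2 * ‖sphH n (k:ℂ)‖ * (CJ * Real.exp |z.im|) * ‖z‖ := by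
          nlinarith [norm_nonneg z]
      _ = k ^ 2 * ‖sphH n (k:ℂ)‖ * CJ * Real.exp |z.im| * ‖z‖ := by ring
  have t2 : ‖calH n (k:ℂ) *
      (z * sphJ n z - (Complex.sin z * a.coeff 1 + Complex.cos z * b.coeff 1))‖
      ≤ (‖calH n (k:ℂ)‖ * CE) * Real.exp |z.im| / ‖z‖ := by
    rw [norm_mul]
    calc ‖calH n (k:ℂ)‖ *
        ‖z * sphJ n z - (Complex.sin z * a.coeff 1 + Complex.cos z * b.coeff 1)‖
        ≤ ‖calH n (k:ℂ)‖ * (CE * Real.exp |z.im| / ‖z‖) :=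
          mul_le_mul_of_nonneg_left (hCE z hz1) hB0
      _ = (‖calH n (k:ℂ)‖ * CE) * Real.exp |z.im| / ‖z‖ := by ring
  refine le_trans (SphAux.tri_sub _ _) ?_
  refine le_trans (add_le_add t1 t2) ?_
  rw [← add_div, div_le_div_iff₀ hzpos hzpos]
  have hone : (0:ℝ) ≤ Real.exp |z.im| * ‖z‖ := mul_nonneg he0 hzpos.le
  nlinarith [hone]
end

section
/- Fix an integer n ≥ 1, a wave number k > 0, a constant C > 0 and L ∈ ℕ. (i) If (z_l)_{l ≥ L} are complex numbers with f_n^1(z_l) = 0 and |z_l − z̃¹_{n,l}| ≤ C/l for all l ≥ L, then z_l² ≠ k² for all sufficiently large l, and, setting λ_l := k²/(z_l² − k²), there exists C′ > 0 such that |λ_l − 4k²/((1+2l+n)²π²)| ≤ C′ l^{−4} for all sufficiently large l. (ii) Likewise, if (z_l)_{l ≥ L} satisfy f_n^2(z_l) = 0 and |z_l − z̃²_{n,l}| ≤ C/l for all l ≥ L, then there exists C′ > 0 such that |k²/(z_l² − k²) − 4k²/((2l+n)²π²)| ≤ C′ l^{−4} for all sufficiently large l. -/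
open Complex Real Filter

set_option maxHeartbeats 1000000 in

lemma key (k : ℝ) (hk : 0 < k) (C M : ℝ) (hC : 0 < C) (hM : 1 ≤ M) (L : ℕ)
    (z : ℕ → ℂ) (ρ : ℕ → ℝ)
    (hρ1 : ∀ l : ℕ, (l : ℝ) ≤ ρ l)
    (hρ2 : ∀ l : ℕ, 1 ≤ l → ρ l ≤ M * l)
    (hz : ∀ l : ℕ, L ≤ l → ‖z l - (ρ l : ℂ)‖ ≤ C / l) :
    ∃ C' > (0:ℝ), ∃ L' : ℕ, ∀ l : ℕ, L' ≤ l →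
      (z l)^2 ≠ (k:ℂ)^2 ∧
      ‖(k:ℂ)^2/((z l)^2 - (k:ℂ)^2) - (k:ℂ)^2/(((ρ l : ℝ)):ℂ)^2‖ ≤
        C' / (l:ℝ)^4 := by
  refine ⟨2*k^2*(C*(2*M+C)+k^2), by positivity, max L (⌈C⌉₊ + ⌈2*k⌉₊ + 8), fun l hl => ?_⟩
  have hlL : L ≤ l := le_trans (le_max_left _ _) hl
  have hl8 : (⌈C⌉₊ + ⌈2*k⌉₊ + 8 : ℕ) ≤ l := le_trans (le_max_right _ _) hl
  set r : ℝ := (l : ℝ) with hr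
  have hrC : C ≤ r := by
    have h0 : (⌈C⌉₊ : ℕ) ≤ l := by omega
    have : ((⌈C⌉₊ : ℕ) : ℝ) ≤ r := by rw [hr]; exact_mod_cast h0
    exact le_trans (Nat.le_ceil C) this
  have hrk : 2*k + 8 ≤ r := by
    have h0 : (⌈2*k⌉₊ + 8 : ℕ) ≤ l := by omega
    have h1 : ((⌈2*k⌉₊ + 8 : ℕ) : ℝ) ≤ r := by rw [hr]; exact_mod_cast h0
    have := Nat.le_ceil (2*k)
    push_cast at h1
    linarith
  have hr8 : (8:ℝ) ≤ r := by linarith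
  have hr1 : (1:ℝ) ≤ r := by linarith
  have hr0 : (0:ℝ) < r := by linarith
  have hρl : r ≤ ρ l := hρ1 l
  have hρM : ρ l ≤ M * r := hρ2 l (by omega)
  have hρ0 : 0 < ρ l := lt_of_lt_of_le hr0 hρl
  have hd : ‖z l - (ρ l : ℂ)‖ ≤ C / r := hz l hlL
  have hCr1 : C / r ≤ 1 := by rw [div_le_one hr0]; linarith
  have habsρ : ‖(ρ l : ℂ)‖ = ρ l := by
    rw [Complex.norm_real, Real.norm_eq_abs, abs_of_pos hρ0]
  have habsk : ‖(k:ℂ)^2‖ = k^2 := by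
    rw [norm_pow, Complex.norm_real, Real.norm_eq_abs, abs_of_pos hk]
  -- |z l| ≥ ρ l - C/r ≥ r - 1
  have habsz : r - 1 ≤ ‖z l‖ := by
    have h1 : ‖(ρ l : ℂ)‖ - ‖z l‖ ≤ ‖(ρ l:ℂ) - z l‖ := by
      have := norm_sub_norm_le ((ρ l : ℂ)) (z l)
      simpa using this
    have h1' : ‖(ρ l:ℂ) - z l‖ = ‖z l - (ρ l:ℂ)‖ := by
      rw [show (ρ l:ℂ) - z l = -(z l - (ρ l:ℂ)) by ring, norm_neg]
    rw [h1', habsρ] at h1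
    nlinarith [le_trans h1 hd]
  -- denominator bound
  have hden : r^2/2 ≤ ‖(z l)^2 - (k:ℂ)^2‖ := by
    have h1 : ‖(z l)^2‖ - ‖(k:ℂ)^2‖ ≤ ‖(z l)^2 - (k:ℂ)^2‖ := by
      have := norm_sub_norm_le ((z l)^2) ((k:ℂ)^2)
      simpa using this
    rw [norm_pow, habsk] at h1
    nlinarith [hrk, hr8, hk, habsz]
  have hzk : (z l)^2 ≠ (k:ℂ)^2 := by
    intro h
    rw [h, sub_self, norm_zero] at hden
    nlinarith
  refine ⟨hzk, ?_⟩
  -- numerator bound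
  have hnum : ‖((ρ l : ℝ):ℂ)^2 + (k:ℂ)^2 - (z l)^2‖ ≤ C*(2*M+C) + k^2 := by
    have h1 : ((ρ l : ℝ):ℂ)^2 + (k:ℂ)^2 - (z l)^2
        = ((ρ l:ℂ) - z l) * ((ρ l:ℂ) + z l) + (k:ℂ)^2 := by ring
    rw [h1]
    have ha : ‖(ρ l:ℂ) - z l‖ ≤ C / r := by
      rw [show (ρ l:ℂ) - z l = -(z l - (ρ l:ℂ)) by ring, norm_neg]; exact hd
    have h3 : ‖z l‖ ≤ ρ l + C/r := by
      have h4 : ‖z l‖ ≤ ‖z l - (ρ l:ℂ)‖ + ‖(ρ l:ℂ)‖ := by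
        have := norm_add_le (z l - (ρ l:ℂ)) ((ρ l:ℂ))
        simpa using this
      rw [habsρ] at h4
      linarith [hd]
    have hb : ‖(ρ l:ℂ) + z l‖ ≤ (2*M+C)*r := by
      have h5 : ‖(ρ l:ℂ) + z l‖ ≤ ρ l + (ρ l + C/r) := by
        have := norm_add_le ((ρ l:ℂ)) (z l)
        rw [habsρ] at this
        linarith [h3]
      have hCrC : C/r ≤ C := by rw [div_le_iff₀ hr0]; nlinarith
      nlinarith
    calc ‖((ρ l:ℂ) - z l) * ((ρ l:ℂ) + z l) + (k:ℂ)^2‖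
        ≤ ‖((ρ l:ℂ) - z l) * ((ρ l:ℂ) + z l)‖ + ‖(k:ℂ)^2‖ :=
          norm_add_le _ _
      _ = ‖(ρ l:ℂ) - z l‖ * ‖(ρ l:ℂ) + z l‖ + k^2 := by
          rw [norm_mul, habsk]
      _ ≤ (C/r) * ((2*M+C)*r) + k^2 :=
          add_le_add_left (mul_le_mul ha hb (norm_nonneg _) (by positivity)) _
      _ = C*(2*M+C) + k^2 := by field_simp
  -- identity
  have hρne : ((ρ l : ℝ):ℂ) ≠ 0 := by
    simp only [ne_eq, Complex.ofReal_eq_zero]; exact ne_of_gt hρ0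
  have hzkne : (z l)^2 - (k:ℂ)^2 ≠ 0 := sub_ne_zero.mpr hzk
  have hid : (k:ℂ)^2/((z l)^2 - (k:ℂ)^2) - (k:ℂ)^2/(((ρ l : ℝ)):ℂ)^2
      = (k:ℂ)^2 * ((((ρ l : ℝ)):ℂ)^2 + (k:ℂ)^2 - (z l)^2) / (((z l)^2 - (k:ℂ)^2) * (((ρ l : ℝ)):ℂ)^2) := by
    field_simp
    ring
  rw [hid, norm_div, norm_mul, norm_mul, norm_pow, norm_pow, Complex.norm_real, Real.norm_eq_abs,
    Complex.norm_real, Real.norm_eq_abs, abs_of_pos hk, abs_of_pos hρ0]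
  have hρ2r : r^2 ≤ (ρ l)^2 := by nlinarith
  calc k^2 * ‖((ρ l : ℝ):ℂ)^2 + (k:ℂ)^2 - (z l)^2‖ /
        (‖(z l)^2 - (k:ℂ)^2‖ * (ρ l)^2)
      ≤ k^2 * (C*(2*M+C)+k^2) / (r^2/2 * r^2) := by
        apply div_le_div₀ (by positivity)
          (by nlinarith [norm_nonneg (((ρ l : ℝ):ℂ)^2 + (k:ℂ)^2 - (z l)^2)])
          (by positivity)
        nlinarith [hden, hρ2r, norm_nonneg ((z l)^2 - (k:ℂ)^2)]
    _ = (2*k^2*(C*(2*M+C)+k^2)) / r^4 := by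
        field_simp

/-- asymptotics of the eigenvalues `λ_l = k²/(z_l² − k²)` along the zero
sequences of `f_n^1` and `f_n^2`. -/
theorem stmt6 (n : ℕ) (hn : 1 ≤ n) (k : ℝ) (hk : 0 < k) (C : ℝ) (hC : 0 < C) (L : ℕ)
    (z1 z2 : ℕ → ℂ) :
    ((∀ l : ℕ, L ≤ l → f1 n k (z1 l) = 0 ∧ ‖z1 l - zt1 n l‖ ≤ C / l) →
      ∃ C' > (0 : ℝ), ∃ L' : ℕ, ∀ l : ℕ, L' ≤ l →
        (z1 l) ^ 2 ≠ (k : ℂ) ^ 2 ∧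
        ‖(k : ℂ) ^ 2 / ((z1 l) ^ 2 - (k : ℂ) ^ 2) -
            ((4 * k ^ 2 / (((1 + 2 * l + n : ℕ) : ℝ) ^ 2 * Real.pi ^ 2) : ℝ) : ℂ)‖ ≤
          C' / (l : ℝ) ^ 4) ∧
    ((∀ l : ℕ, L ≤ l → f2 n k (z2 l) = 0 ∧ ‖z2 l - zt2 n l‖ ≤ C / l) →
      ∃ C' > (0 : ℝ), ∃ L' : ℕ, ∀ l : ℕ, L' ≤ l →
        ‖(k : ℂ) ^ 2 / ((z2 l) ^ 2 - (k : ℂ) ^ 2) -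
            ((4 * k ^ 2 / (((2 * l + n : ℕ) : ℝ) ^ 2 * Real.pi ^ 2) : ℝ) : ℂ)‖ ≤
          C' / (l : ℝ) ^ 4) := by
  have hpi3 := Real.pi_gt_three
  have hn0 : (0:ℝ) ≤ (n:ℝ) := Nat.cast_nonneg n
  have hn1 : (1:ℝ) ≤ (n:ℝ) := by exact_mod_cast hn
  have hM : (1:ℝ) ≤ (3 + (n:ℝ)) * Real.pi := by nlinarith
  constructor
  · intro h
    obtain ⟨C', hC', L', hL'⟩ := key k hk C ((3 + (n:ℝ)) * Real.pi) hC hM L z1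
      (fun l => ((1 + 2 * l + n : ℕ) : ℝ) * Real.pi / 2)
      (fun l => by
        push_cast
        nlinarith [Nat.cast_nonneg (α := ℝ) l])
      (fun l hl => by
        have hl1 : (1:ℝ) ≤ (l:ℝ) := by exact_mod_cast hl
        push_cast
        have key2 : (1 + 2*(l:ℝ) + (n:ℝ)) ≤ 2*(3+(n:ℝ))*(l:ℝ) := by nlinarith
        nlinarith [mul_le_mul_of_nonneg_right key2 Real.pi_pos.le])
      (fun l hl => by
        have heq : ((((1 + 2 * l + n : ℕ) : ℝ) * Real.pi / 2 : ℝ) : ℂ) = zt1 n l := by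
          simp only [zt1]; push_cast; ring
        rw [heq]; exact (h l hl).2)
    refine ⟨C', hC', L', fun l hl => ?_⟩
    obtain ⟨h1, h2⟩ := hL' l hl
    refine ⟨h1, ?_⟩
    have hN : ((1 + 2 * l + n : ℕ) : ℝ) ≠ 0 := Nat.cast_ne_zero.mpr (by omega)
    have hreal : (4 * k ^ 2 / (((1 + 2 * l + n : ℕ) : ℝ) ^ 2 * Real.pi ^ 2) : ℝ)
        = k ^ 2 / ((((1 + 2 * l + n : ℕ) : ℝ) * Real.pi / 2) ^ 2) := by
      field_simp
      ring
    have hcast : ((4 * k ^ 2 / (((1 + 2 * l + n : ℕ) : ℝ) ^ 2 * Real.pi ^ 2) : ℝ) : ℂ)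
        = (k:ℂ)^2 / ((((( 1 + 2 * l + n : ℕ) : ℝ) * Real.pi / 2 : ℝ)) : ℂ)^2 := by
      rw [hreal]; push_cast; ring
    rw [hcast]
    exact h2
  · intro h
    obtain ⟨C', hC', L', hL'⟩ := key k hk C ((3 + (n:ℝ)) * Real.pi) hC hM L z2
      (fun l => ((2 * l + n : ℕ) : ℝ) * Real.pi / 2)
      (fun l => by
        push_cast
        nlinarith [Nat.cast_nonneg (α := ℝ) l])
      (fun l hl => by
        have hl1 : (1:ℝ) ≤ (l:ℝ) := by exact_mod_cast hl
        push_cast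
        have key2 : (2*(l:ℝ) + (n:ℝ)) ≤ 2*(3+(n:ℝ))*(l:ℝ) := by nlinarith
        nlinarith [mul_le_mul_of_nonneg_right key2 Real.pi_pos.le])
      (fun l hl => by
        have heq : ((((2 * l + n : ℕ) : ℝ) * Real.pi / 2 : ℝ) : ℂ) = zt2 n l := by
          simp only [zt2]; push_cast; ring
        rw [heq]; exact (h l hl).2)
    refine ⟨C', hC', L', fun l hl => ?_⟩
    obtain ⟨h1, h2⟩ := hL' l hl
    have hN : ((2 * l + n : ℕ) : ℝ) ≠ 0 := Nat.cast_ne_zero.mpr (by omega)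
    have hreal : (4 * k ^ 2 / (((2 * l + n : ℕ) : ℝ) ^ 2 * Real.pi ^ 2) : ℝ)
        = k ^ 2 / ((((2 * l + n : ℕ) : ℝ) * Real.pi / 2) ^ 2) := by
      field_simp
      ring
    have hcast : ((4 * k ^ 2 / (((2 * l + n : ℕ) : ℝ) ^ 2 * Real.pi ^ 2) : ℝ) : ℂ)
        = (k:ℂ)^2 / (((((2 * l + n : ℕ) : ℝ) * Real.pi / 2 : ℝ)) : ℂ)^2 := by
      rw [hreal]; push_cast; ring
    rw [hcast]
    exact h2
end

section
/- Fix a wave number k > 0, a parameter κ ∈ ℂ \ {0}, and a compact interval [a,b] ⊂ (1, ∞). There exists a constant C > 0 such that for every integer n ≥ 1 and every t ∈ [a,b], | i k³ √(n(n+1)) · h_n^{(1)}(k t) · ∫₀¹ j_n(k r) j_n(κ r) r² dr | ≤ C · (e/(2t))^{n+1} · |κ|^{n−1} / (n+1)^n. (This is the decay, as n → ∞, of the exterior value of the transverse-electric propagating function φ_n^{λ,1} with interior wave number κ = k√(1+1/λ).) -/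
open Complex Real Filter

/- ## Auxiliary lemmas -/

lemma df_step' (s : ℕ) : Nat.doubleFactorial (s+2) = (s+2) * Nat.doubleFactorial s := rfl

lemma df_mono' (n m : ℕ) :
    Nat.doubleFactorial (2*n+1) ≤ Nat.doubleFactorial (2*n+2*m+1) := by
  induction m with
  | zero => simp
  | succ m ih =>
    have h : 2*n+2*(m+1)+1 = (2*n+2*m+1)+2 := by ring
    rw [h, df_step']
    calc Nat.doubleFactorial (2*n+1) ≤ Nat.doubleFactorial (2*n+2*m+1) := ih
    _ ≤ (2*n+2*m+1+2) * Nat.doubleFactorial (2*n+2*m+1) := Nat.le_mul_of_pos_left _ (by omega)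

lemma df_ge' (n : ℕ) : 2^n * n.factorial ≤ Nat.doubleFactorial (2*n+1) := by
  induction n with
  | zero => simp
  | succ n ih =>
    have h : 2*(n+1)+1 = (2*n+1)+2 := by ring
    rw [h, df_step']
    have h1 : 2^(n+1) * (n+1).factorial = (2*(n+1)) * (2^n * n.factorial) := by
      rw [Nat.factorial_succ]; ring
    rw [h1]
    exact Nat.mul_le_mul (by omega) ih

lemma df_id' (n : ℕ) :
    (2*n+1) * (2*n).factorial = Nat.doubleFactorial (2*n+1) * (2^n * n.factorial) := by
  have h1 : (2*n+1).factorial = Nat.doubleFactorial (2*n+1) * Nat.doubleFactorial (2*n) :=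
    Nat.factorial_eq_mul_doubleFactorial (2*n)
  have h2 : Nat.doubleFactorial (2*n) = 2^n * n.factorial := Nat.doubleFactorial_two_mul n
  have h3 : (2*n+1).factorial = (2*n+1) * (2*n).factorial := Nat.factorial_succ (2*n)
  rw [← h2, ← h1, ← h3]

lemma keyNat' (n : ℕ) : ∀ d m, m + d = n →
    (n+m).factorial * 2^n * n.factorial ≤ (2*n).factorial * m.factorial * 2^m := by
  intro d
  induction d with
  | zero => intro m hm; subst hm; simp [two_mul]; ring_nf; omega
  | succ d ih =>
    intro m hm
    have h1 := ih (m+1) (by omega)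
    have key : (n+m+1) * ((n+m).factorial * 2^n * n.factorial) ≤
        (n+m+1) * ((2*n).factorial * m.factorial * 2^m) := by
      calc (n+m+1) * ((n+m).factorial * 2^n * n.factorial)
          = (n+(m+1)).factorial * 2^n * n.factorial := by
            rw [show n+(m+1) = (n+m)+1 by ring, Nat.factorial_succ]; ring
        _ ≤ (2*n).factorial * (m+1).factorial * 2^(m+1) := h1
        _ = (2*(m+1)) * ((2*n).factorial * m.factorial * 2^m) := by
            rw [Nat.factorial_succ]; ring
        _ ≤ (n+m+1) * ((2*n).factorial * m.factorial * 2^m) :=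
            Nat.mul_le_mul_right _ (by omega)
    exact Nat.le_of_mul_le_mul_left key (by omega)

lemma keyReal' (n m : ℕ) (hm : m ≤ n) :
    ((n+m).factorial : ℝ) / (m.factorial * 2^m)
      ≤ ((2*n).factorial : ℝ) / (2^n * n.factorial) := by
  rw [div_le_div_iff₀ (by positivity) (by positivity)]
  have := keyNat' n (n - m) m (by omega)
  calc ((n+m).factorial : ℝ) * (2^n * n.factorial)
      = (((n+m).factorial * 2^n * n.factorial : ℕ) : ℝ) := by push_cast; ring
    _ ≤ (((2*n).factorial * m.factorial * 2^m : ℕ) : ℝ) := by exact_mod_cast this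
    _ = ((2*n).factorial : ℝ) * (m.factorial * 2^m) := by push_cast; ring

lemma sphJ_bound (n : ℕ) (z : ℂ) :
    ‖sphJ n z‖ ≤ ‖z‖ ^ n * Real.exp (‖z‖ ^ 2 / 2)
      / (Nat.doubleFactorial (2*n+1) : ℝ) := by
  set x : ℝ := ‖z‖ with hx
  have hx0 : 0 ≤ x := norm_nonneg z
  set D : ℝ := (Nat.doubleFactorial (2*n+1) : ℝ) with hD
  have hD0 : 0 < D := by positivity
  set f : ℕ → ℂ := fun m => ((-1 : ℂ) ^ m * z ^ (n + 2 * m)) /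
    ((2 : ℂ) ^ m * (m.factorial : ℂ) * (Nat.doubleFactorial (2 * n + 2 * m + 1) : ℂ)) with hf
  set g : ℕ → ℝ := fun m => x^n/D * ((x^2/2)^m / m.factorial) with hg
  have habs : ∀ m, ‖f m‖ ≤ g m := by
    intro m
    have h2 : ‖f m‖ = x^(n+2*m) / (2^m * m.factorial *
        (Nat.doubleFactorial (2*n+2*m+1) : ℝ)) := by
      simp [hf, hx, norm_div, norm_mul, norm_pow, Complex.norm_natCast]
    rw [h2]
    show _ ≤ x^n/D * ((x^2/2)^m / (m.factorial:ℝ))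
    have hDD : D ≤ ((Nat.doubleFactorial (2*n+2*m+1)):ℝ) := by
      rw [hD]; exact_mod_cast df_mono' n m
    calc x^(n+2*m) / (2^m * m.factorial * (Nat.doubleFactorial (2*n+2*m+1) : ℝ))
        ≤ x^(n+2*m) / (2^m * m.factorial * D) := by
          gcongr
      _ = x^n/D * ((x^2/2)^m / (m.factorial:ℝ)) := by
          rw [pow_add, pow_mul, div_pow]; ring
  have hgsum : Summable g := ((Real.summable_pow_div_factorial (x^2/2)).mul_left _)
  have hfsum : Summable (fun m => ‖f m‖) :=
    Summable.of_nonneg_of_le (fun m => norm_nonneg _) habs hgsum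
  have h1 : ‖sphJ n z‖ ≤ ∑' m, ‖f m‖ := by
    exact norm_tsum_le_tsum_norm hfsum
  have h2 : ∑' m, ‖f m‖ ≤ ∑' m, g m := Summable.tsum_le_tsum habs hfsum hgsum
  have h3 : ∑' m, g m = x^n/D * ∑' m, ((x^2/2)^m / m.factorial) := tsum_mul_left
  have h4 : ∑' m, ((x^2/2)^m / (m.factorial:ℝ)) ≤ Real.exp (x^2/2) := by
    apply Summable.tsum_le_of_sum_range_le (Real.summable_pow_div_factorial _)
    intro nn
    exact Real.sum_le_exp_of_nonneg (by positivity) nn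
  calc ‖sphJ n z‖ ≤ ∑' m, ‖f m‖ := h1
    _ ≤ ∑' m, g m := h2
    _ = x^n/D * ∑' m, ((x^2/2)^m / m.factorial) := h3
    _ ≤ x^n/D * Real.exp (x^2/2) := by
        apply mul_le_mul_of_nonneg_left h4 (by positivity)
    _ = x^n * Real.exp (x^2/2) / D := by ring

lemma sphJ_bound' (n : ℕ) (z : ℂ) (c : ℝ) (hc : ‖z‖ ≤ c) :
    ‖sphJ n z‖ ≤ c ^ n * Real.exp (c ^ 2 / 2)
      / (Nat.doubleFactorial (2*n+1) : ℝ) := by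
  refine le_trans (sphJ_bound n z) ?_
  have h0 : (0:ℝ) ≤ ‖z‖ := norm_nonneg z
  have hc0 : (0:ℝ) ≤ c := h0.trans hc
  have h2 : ‖z‖ ^ n ≤ c ^ n := pow_le_pow_left₀ h0 hc n
  have h3 : Real.exp (‖z‖ ^ 2 / 2) ≤ Real.exp (c ^ 2 / 2) :=
    Real.exp_le_exp.mpr (by nlinarith)
  exact div_le_div₀ (mul_nonneg (pow_nonneg hc0 n) (Real.exp_pos _).le)
    (mul_le_mul h2 h3 (Real.exp_pos _).le (pow_nonneg hc0 n)) (by positivity) le_rfl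

lemma sphH_bound (n : ℕ) (x : ℝ) (hx : 0 < x) :
    ‖sphH n (x:ℂ)‖ ≤
      ((2*n).factorial : ℝ) / (2^n * n.factorial) * Real.exp x / x^(n+1) := by
  set Dh : ℝ := ((2*n).factorial : ℝ) / (2^n * n.factorial) with hDh
  have hDh0 : 0 < Dh := by positivity
  rw [sphH, norm_mul, norm_div, norm_mul]
  have hA1 : ‖(-Complex.I) ^ (n+1)‖ = 1 := by
    rw [norm_pow]; simp
  have hA2 : ‖Complex.exp (Complex.I * (x:ℂ))‖ = 1 := by
    rw [Complex.norm_exp]; simp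
  have hA3 : ‖(x:ℂ)‖ = x := by
    rw [Complex.norm_real, Real.norm_eq_abs, abs_of_pos hx]
  rw [hA1, hA2, hA3, one_mul]
  have hsum : ‖∑ m ∈ Finset.range (n + 1),
      (Complex.I ^ m * ((n + m).factorial : ℂ)) /
        ((m.factorial : ℂ) * (2 * (x:ℂ)) ^ m * ((n - m).factorial : ℂ))‖
      ≤ Dh * Real.exp x / x^n := by
    calc ‖∑ m ∈ Finset.range (n + 1), (Complex.I ^ m * ((n + m).factorial : ℂ)) /
            ((m.factorial : ℂ) * (2 * (x:ℂ)) ^ m * ((n - m).factorial : ℂ))‖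
        ≤ ∑ m ∈ Finset.range (n + 1), ‖(Complex.I ^ m * ((n + m).factorial : ℂ)) /
            ((m.factorial : ℂ) * (2 * (x:ℂ)) ^ m * ((n - m).factorial : ℂ))‖ :=
          norm_sum_le _ _
      _ ≤ ∑ m ∈ Finset.range (n + 1), Dh / x^n * (x^(n-m) / (n-m).factorial) := by
          apply Finset.sum_le_sum
          intro m hm
          have hmn : m ≤ n := by
            have := Finset.mem_range.mp hm; omega
          have habs : ‖(Complex.I ^ m * ((n + m).factorial : ℂ)) /
              ((m.factorial : ℂ) * (2 * (x:ℂ)) ^ m * ((n - m).factorial : ℂ))‖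
              = ((n+m).factorial : ℝ) / (m.factorial * (2*x)^m * (n-m).factorial) := by
            rw [norm_div, norm_mul, norm_mul, norm_mul, norm_pow, norm_pow]
            simp [abs_of_pos hx, Complex.norm_natCast]
          have hkey : ((n+m).factorial:ℝ) ≤ Dh * (m.factorial * 2^m) := by
            have h := keyReal' n m hmn
            rwa [div_le_iff₀ (by positivity)] at h
          have hxpow : x^(n-m) * x^m = x^n := by
            rw [← pow_add]; congr 1; omega
          rw [habs, div_mul_div_comm, div_le_div_iff₀ (by positivity) (by positivity), mul_pow]
          calc ((n+m).factorial : ℝ) * (x^n * (n-m).factorial)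
              ≤ (Dh * (m.factorial * 2^m)) * (x^n * (n-m).factorial) := by
                apply mul_le_mul_of_nonneg_right hkey (by positivity)
            _ = Dh * x^(n-m) * (m.factorial * (2^m * x^m) * (n-m).factorial) := by
                rw [← hxpow]; ring
      _ = Dh / x^n * ∑ m ∈ Finset.range (n + 1), (x^(n-m) / (n-m).factorial) := by
          rw [Finset.mul_sum]
      _ = Dh / x^n * ∑ j ∈ Finset.range (n + 1), (x^j / j.factorial) := by
          congr 1
          rw [← Finset.sum_range_reflect]
          apply Finset.sum_congr rfl
          intro j hj
          have hj2 : j ≤ n := by have := Finset.mem_range.mp hj; omega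
          rw [show n + 1 - 1 - j = n - j by omega, show n - (n - j) = j by omega]
      _ ≤ Dh / x^n * Real.exp x := by
          apply mul_le_mul_of_nonneg_left (Real.sum_le_exp_of_nonneg hx.le _) (by positivity)
      _ = Dh * Real.exp x / x^n := by ring
  calc 1 / x * ‖∑ m ∈ Finset.range (n + 1), _‖ ≤ 1 / x * (Dh * Real.exp x / x^n) := by
        apply mul_le_mul_of_nonneg_left hsum (by positivity)
    _ = Dh * Real.exp x / x^(n+1) := by rw [pow_succ]; ring

lemma pow_le_exp_fac' (n : ℕ) : ((n:ℝ)+1)^n ≤ Real.exp ((n:ℝ)+1) * n.factorial := by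
  have h1 : ((n:ℝ)+1)^n / n.factorial ≤ Real.exp ((n:ℝ)+1) := by
    calc ((n:ℝ)+1)^n / n.factorial
        ≤ ∑ i ∈ Finset.range (n+1), ((n:ℝ)+1)^i / i.factorial := by
          apply Finset.single_le_sum (f := fun i => ((n:ℝ)+1)^i / (i.factorial:ℝ))
            (fun i _ => by positivity) (Finset.self_mem_range_succ n)
      _ ≤ Real.exp ((n:ℝ)+1) := Real.sum_le_exp_of_nonneg (by positivity) _
  rw [div_le_iff₀ (by positivity)] at h1
  linarith [h1]

lemma df_exp' (n : ℕ) : (2:ℝ)^n * ((n:ℝ)+1)^n ≤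
    Real.exp 1 ^ (n+1) * (Nat.doubleFactorial (2*n+1) : ℝ) := by
  have h1 : Real.exp 1 ^ (n+1) = Real.exp ((n:ℝ)+1) := by
    rw [← Real.exp_nat_mul]; norm_num
  rw [h1]
  calc (2:ℝ)^n * ((n:ℝ)+1)^n ≤ (2:ℝ)^n * (Real.exp ((n:ℝ)+1) * n.factorial) := by
        apply mul_le_mul_of_nonneg_left (pow_le_exp_fac' n) (by positivity)
    _ = Real.exp ((n:ℝ)+1) * ((2^n * n.factorial : ℕ) : ℝ) := by push_cast; ring
    _ ≤ Real.exp ((n:ℝ)+1) * (Nat.doubleFactorial (2*n+1) : ℝ) := by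
        apply mul_le_mul_of_nonneg_left _ (by positivity)
        exact_mod_cast df_ge' n

lemma core_ineq (k t Aκ : ℝ) (hk : 0 < k) (ht : 0 < t) (hA : 0 < Aκ) (n : ℕ) (hn : 1 ≤ n) :
    k^3 * ((n:ℝ)+1) * (((2*n).factorial : ℝ) / (2^n * n.factorial)) * k^n * Aκ^n /
        ((k*t)^(n+1) * ((Nat.doubleFactorial (2*n+1) : ℝ))^2)
      ≤ 2 * k^2 * Aκ * (Real.exp 1 / (2*t))^(n+1) * Aκ^(n-1) / ((n:ℝ)+1)^n := by
  set D : ℝ := (Nat.doubleFactorial (2*n+1) : ℝ) with hD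
  set Dh : ℝ := ((2*n).factorial : ℝ) / (2^n * n.factorial) with hDh
  have hD0 : 0 < D := by rw [hD]; positivity
  have hDh0 : 0 < Dh := by rw [hDh]; positivity
  have hcast : (2*(n:ℝ)+1) * ((2*n).factorial:ℝ) = D * (2^n * (n.factorial:ℝ)) := by
    rw [hD]; exact_mod_cast congrArg (Nat.cast (R := ℝ)) (df_id' n)
  have hDhD : Dh * (2*(n:ℝ)+1) = D := by
    rw [hDh, div_mul_eq_mul_div, div_eq_iff (by positivity)]
    linear_combination hcast
  have hAn : Aκ^n = Aκ * Aκ^(n-1) := by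
    conv_lhs => rw [show n = (n-1)+1 by omega]
    rw [pow_succ]; ring
  have key : ((n:ℝ)+1) * Dh * 2^(n+1) * ((n:ℝ)+1)^n ≤ 2 * Real.exp 1 ^(n+1) * D^2 := by
    have hn1 : 2*((n:ℝ)+1) ≤ 2*(2*(n:ℝ)+1) := by
      have h0n : (0:ℝ) ≤ n := Nat.cast_nonneg n
      linarith
    have hstep : 2 * ((n:ℝ)+1) * ((2:ℝ)^n * ((n:ℝ)+1)^n) * D
        ≤ 2 * (2*(n:ℝ)+1) * (Real.exp 1 ^(n+1) * D) * D := by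
      apply mul_le_mul_of_nonneg_right _ hD0.le
      exact mul_le_mul hn1 (df_exp' n) (by positivity) (by positivity)
    have hmul : (2*(n:ℝ)+1) * (((n:ℝ)+1) * Dh * 2^(n+1) * ((n:ℝ)+1)^n)
        ≤ (2*(n:ℝ)+1) * (2 * Real.exp 1 ^(n+1) * D^2) := by
      calc (2*(n:ℝ)+1) * (((n:ℝ)+1) * Dh * 2^(n+1) * ((n:ℝ)+1)^n)
          = 2 * ((n:ℝ)+1) * ((2:ℝ)^n * ((n:ℝ)+1)^n) * (Dh * (2*(n:ℝ)+1)) := by ring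
        _ = 2 * ((n:ℝ)+1) * ((2:ℝ)^n * ((n:ℝ)+1)^n) * D := by rw [hDhD]
        _ ≤ 2 * (2*(n:ℝ)+1) * (Real.exp 1 ^(n+1) * D) * D := hstep
        _ = (2*(n:ℝ)+1) * (2 * Real.exp 1 ^(n+1) * D^2) := by ring
    have h2n1 : (0:ℝ) < 2*(n:ℝ)+1 := by positivity
    exact le_of_mul_le_mul_left hmul h2n1
  have hrhs : 2 * k^2 * Aκ * (Real.exp 1 / (2*t))^(n+1) * Aκ^(n-1) / ((n:ℝ)+1)^n
      = (2 * k^2 * Aκ * Real.exp 1 ^(n+1) * Aκ^(n-1)) / ((2*t)^(n+1) * ((n:ℝ)+1)^n) := by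
    rw [div_pow]; ring
  rw [hrhs, div_le_div_iff₀ (by positivity) (by positivity)]
  calc k^3 * ((n:ℝ)+1) * Dh * k^n * Aκ^n * ((2*t)^(n+1) * ((n:ℝ)+1)^n)
      = (k^2 * k^(n+1) * t^(n+1) * Aκ^n) * (((n:ℝ)+1) * Dh * 2^(n+1) * ((n:ℝ)+1)^n) := by
        ring
    _ ≤ (k^2 * k^(n+1) * t^(n+1) * Aκ^n) * (2 * Real.exp 1 ^(n+1) * D^2) := by
        apply mul_le_mul_of_nonneg_left key (by positivity)
    _ = 2 * k^2 * Aκ * Real.exp 1 ^(n+1) * Aκ^(n-1) * ((k*t)^(n+1) * D^2) := by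
        rw [hAn]; ring

/-- decay in `n` of the exterior TE propagating function. -/
theorem stmt7 (k : ℝ) (hk : 0 < k) (κ : ℂ) (hκ : κ ≠ 0) (a b : ℝ) (ha : 1 < a)
    (hab : a ≤ b) :
    ∃ C > (0 : ℝ), ∀ n : ℕ, 1 ≤ n → ∀ t ∈ Set.Icc a b,
      ‖Complex.I * (k : ℂ) ^ 3 *
          ((Real.sqrt ((n : ℝ) * ((n : ℝ) + 1)) : ℝ) : ℂ) * sphH n ((k : ℂ) * (t : ℂ)) *
          ∫ r in (0 : ℝ)..1, sphJ n ((k : ℂ) * (r : ℂ)) * sphJ n (κ * (r : ℂ)) * (r : ℂ) ^ 2‖ ≤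
        C * (Real.exp 1 / (2 * t)) ^ (n + 1) * ‖κ‖ ^ (n - 1) / ((n : ℝ) + 1) ^ n := by
  set Aκ : ℝ := ‖κ‖ with hAκ
  have hA : 0 < Aκ := norm_pos_iff.mpr hκ
  set E1 : ℝ := Real.exp (k^2/2) with hE1
  set E2 : ℝ := Real.exp (Aκ^2/2) with hE2
  set EB : ℝ := Real.exp (k*b) with hEB
  refine ⟨2 * k^2 * EB * E1 * E2 * Aκ, by positivity, ?_⟩
  intro n hn t ht
  obtain ⟨hta, htb⟩ := ht
  have ht1 : 1 < t := lt_of_lt_of_le ha hta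
  have ht0 : 0 < t := by linarith
  have hkt : 0 < k * t := mul_pos hk ht0
  set D : ℝ := (Nat.doubleFactorial (2*n+1) : ℝ) with hD
  have hD0 : 0 < D := by rw [hD]; positivity
  set Dh : ℝ := ((2*n).factorial : ℝ) / (2^n * n.factorial) with hDh
  have hDh0 : 0 < Dh := by rw [hDh]; positivity
  set S : ℝ := Real.sqrt ((n : ℝ) * ((n : ℝ) + 1)) with hS
  have hS0 : 0 ≤ S := Real.sqrt_nonneg _
  have hSle : S ≤ (n:ℝ) + 1 := by
    rw [hS]
    calc Real.sqrt ((n : ℝ) * ((n : ℝ) + 1)) ≤ Real.sqrt (((n:ℝ)+1)^2) := by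
          apply Real.sqrt_le_sqrt
          nlinarith [(Nat.cast_nonneg n : (0:ℝ) ≤ n)]
      _ = (n:ℝ) + 1 := Real.sqrt_sq (by positivity)
  -- Hankel factor
  have hH : ‖sphH n ((k : ℂ) * (t : ℂ))‖ ≤ Dh * EB / (k*t)^(n+1) := by
    have h1 := sphH_bound n (k*t) hkt
    rw [show (((k*t : ℝ)) : ℂ) = (k : ℂ) * (t : ℂ) by push_cast; ring] at h1
    refine le_trans h1 ?_
    rw [hEB]
    gcongr
  -- integral factor
  have hQ : ‖∫ r in (0 : ℝ)..1,
        sphJ n ((k : ℂ) * (r : ℂ)) * sphJ n (κ * (r : ℂ)) * (r : ℂ) ^ 2‖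
      ≤ (k^n * E1 / D) * (Aκ^n * E2 / D) := by
    have hb : ∀ r ∈ Set.uIoc (0:ℝ) 1,
        ‖sphJ n ((k : ℂ) * (r : ℂ)) * sphJ n (κ * (r : ℂ)) * (r : ℂ) ^ 2‖
          ≤ (k^n * E1 / D) * (Aκ^n * E2 / D) := by
      intro r hr
      rw [Set.uIoc_of_le (by norm_num : (0:ℝ) ≤ 1)] at hr
      obtain ⟨hr0, hr1⟩ := hr
      have hj1 : ‖sphJ n ((k : ℂ) * (r : ℂ))‖ ≤ k^n * E1 / D := by
        rw [hD, hE1]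
        apply sphJ_bound'
        rw [norm_mul, Complex.norm_real, Complex.norm_real, Real.norm_eq_abs, Real.norm_eq_abs, abs_of_pos hk, abs_of_pos hr0]
        nlinarith
      have hj2 : ‖sphJ n (κ * (r : ℂ))‖ ≤ Aκ^n * E2 / D := by
        rw [hD, hE2, hAκ]
        apply sphJ_bound'
        rw [norm_mul, Complex.norm_real, Real.norm_eq_abs, abs_of_pos hr0]
        nlinarith [norm_pos_iff.mpr hκ]
      have hr2 : ‖(r : ℂ)^2‖ ≤ 1 := by
        rw [norm_pow, Complex.norm_real, Real.norm_eq_abs, abs_of_pos hr0]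
        nlinarith
      calc ‖sphJ n ((k : ℂ) * (r : ℂ)) * sphJ n (κ * (r : ℂ)) * (r : ℂ) ^ 2‖
          = ‖sphJ n ((k : ℂ) * (r : ℂ))‖ * ‖sphJ n (κ * (r : ℂ))‖
              * ‖(r : ℂ)^2‖ := by
            rw [norm_mul, norm_mul]
        _ ≤ (k^n * E1 / D) * (Aκ^n * E2 / D) * 1 := by
            apply mul_le_mul (mul_le_mul hj1 hj2 (norm_nonneg _) (by positivity)) hr2
              (norm_nonneg _) (by positivity)
        _ = (k^n * E1 / D) * (Aκ^n * E2 / D) := by ring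
    have := intervalIntegral.norm_integral_le_of_norm_le_const hb
    simpa using this
  -- assemble
  rw [norm_mul, norm_mul, norm_mul, norm_mul, Complex.norm_I, norm_pow, Complex.norm_real, Real.norm_eq_abs, abs_of_pos hk,
    Complex.norm_real, Real.norm_eq_abs, _root_.abs_of_nonneg hS0, one_mul]
  calc k^3 * S * ‖sphH n ((k : ℂ) * (t : ℂ))‖ * ‖∫ r in (0 : ℝ)..1,
          sphJ n ((k : ℂ) * (r : ℂ)) * sphJ n (κ * (r : ℂ)) * (r : ℂ) ^ 2‖
      ≤ k^3 * ((n:ℝ)+1) * (Dh * EB / (k*t)^(n+1)) * ((k^n * E1 / D) * (Aκ^n * E2 / D)) := by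
        have w1 : (0:ℝ) ≤ Dh * EB / (k*t)^(n+1) :=
          div_nonneg (mul_nonneg hDh0.le (by positivity)) (by positivity)
        have w2 : (0:ℝ) ≤ k^3 * ((n:ℝ)+1) := by positivity
        exact mul_le_mul
          (mul_le_mul (mul_le_mul le_rfl hSle hS0 (by positivity)) hH (norm_nonneg _)
            w2) hQ (norm_nonneg _) (mul_nonneg w2 w1)
    _ = (EB * E1 * E2) * (k^3 * ((n:ℝ)+1) * Dh * k^n * Aκ^n / ((k*t)^(n+1) * D^2)) := by
        ring
    _ ≤ (EB * E1 * E2) * (2 * k^2 * Aκ * (Real.exp 1 / (2*t))^(n+1) * Aκ^(n-1) / ((n:ℝ)+1)^n) := by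
        apply mul_le_mul_of_nonneg_left _ (by positivity)
        rw [hDh, hD]
        exact core_ineq k t Aκ hk ht0 hA n hn
    _ = 2 * k^2 * EB * E1 * E2 * Aκ * (Real.exp 1 / (2*t))^(n+1) * Aκ^(n-1) / ((n:ℝ)+1)^n := by
        ring
end

section
/- Fix an integer n ≥ 1, a wave number k > 0, a ∈ (0,1), C > 0 and L₀ ∈ ℕ. Suppose (z_l)_{l ≥ L₀} are complex numbers with f_n^1(z_l) = 0 and |z_l − z̃¹_{n,l}| ≤ C/l for all l ≥ L₀. Then there exist C′ > 0 and L ≥ L₀ such that for every l ≥ L, sup_{t ∈ [a,1]} |j_n(z_l t)| ≤ (C′/l) · sup_{t ∈ [0,1]} |j_n(z_l t)|; that is, the transverse-electric propagating functions φ¹_{n,l}(k t) = √(n(n+1)) λ_l j_n(z_l t) localize near the origin at rate O(l^{−1}). -/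
open Complex Real Filter

noncomputable abbrev Complex.abs : AbsoluteValue ℂ ℝ := NormedField.toAbsoluteValue ℂ

theorem Complex.norm_eq_abs (z : ℂ) : ‖z‖ = Complex.abs z := rfl

theorem Complex.abs_ofReal (r : ℝ) : Complex.abs (r : ℂ) = |r| := by
  rw [← Complex.norm_eq_abs]; simp

theorem Complex.abs_I : Complex.abs Complex.I = 1 := by
  rw [← Complex.norm_eq_abs]; simp

theorem Complex.abs_two : Complex.abs (2 : ℂ) = 2 := by
  rw [← Complex.norm_eq_abs]; simp

theorem Complex.abs_natCast (n : ℕ) : Complex.abs (n : ℂ) = n := by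
  rw [← Complex.norm_eq_abs]; simp

theorem Complex.abs_exp' (z : ℂ) : Complex.abs (Complex.exp z) = Real.exp z.re := by
  rw [← Complex.norm_eq_abs]; exact Complex.norm_exp z

noncomputable def sphT (n : ℕ) (z : ℂ) (m : ℕ) : ℂ :=
  ((-1 : ℂ) ^ m * z ^ (n + 2 * m)) /
    ((2 : ℂ) ^ m * (m.factorial : ℂ) * (Nat.doubleFactorial (2 * n + 2 * m + 1) : ℂ))

lemma sphJ_eq (n : ℕ) (z : ℂ) : sphJ n z = ∑' m, sphT n z m := rfl

lemma norm_sphT (n : ℕ) (z : ℂ) (m : ℕ) :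
    ‖sphT n z m‖ = Complex.abs z ^ (n + 2*m) /
      (2 ^ m * (m.factorial : ℝ) * ((Nat.doubleFactorial (2*n+2*m+1)) : ℝ)) := by
  simp [sphT, map_div₀, map_mul, map_pow, Complex.norm_eq_abs, abs_natCast]

lemma norm_sphT_le (n : ℕ) (z : ℂ) (m : ℕ) :
    ‖sphT n z m‖ ≤ Complex.abs z ^ n * ((Complex.abs z ^ 2 / 2) ^ m / m.factorial) := by
  rw [norm_sphT]
  have h1 : (1:ℝ) ≤ ((Nat.doubleFactorial (2*n+2*m+1)) : ℝ) := by
    exact_mod_cast Nat.one_le_iff_ne_zero.2 (Nat.doubleFactorial_pos _).ne'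
  have h2 : (0:ℝ) < 2 ^ m * (m.factorial : ℝ) := by positivity
  calc Complex.abs z ^ (n + 2*m) / (2 ^ m * (m.factorial : ℝ) * ((Nat.doubleFactorial (2*n+2*m+1)) : ℝ))
      ≤ Complex.abs z ^ (n + 2*m) / (2 ^ m * (m.factorial : ℝ) * 1) := by
        gcongr
    _ = Complex.abs z ^ n * ((Complex.abs z ^ 2 / 2) ^ m / m.factorial) := by
        rw [mul_one, pow_add, pow_mul, div_pow]
        field_simp

lemma summable_norm_sphT (n : ℕ) (z : ℂ) : Summable (fun m => ‖sphT n z m‖) := by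
  apply Summable.of_nonneg_of_le (fun m => norm_nonneg _) (norm_sphT_le n z)
  exact (Real.summable_pow_div_factorial _).mul_left _

lemma summable_sphT (n : ℕ) (z : ℂ) : Summable (sphT n z) :=
  (summable_norm_sphT n z).of_norm

lemma hasSum_sphT (n : ℕ) (z : ℂ) : HasSum (sphT n z) (sphJ n z) :=
  (summable_sphT n z).hasSum


lemma sphT_zero_rec (n : ℕ) (z : ℂ) :
    (2*(n:ℂ)+3) * sphT (n+1) z 0 - z * sphT n z 0 = 0 := by
  simp only [sphT]
  have e1 : 2*(n+1)+2*0+1 = (2*n+2*0+1)+2 := by ring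
  have e2 : 2*n+2*0+1 = 2*n+1 := by ring
  rw [e1, Nat.doubleFactorial_add_two, e2]
  push_cast
  rw [sub_eq_zero]
  simp only [mul_div_assoc']
  have hD : (((2*n+1).doubleFactorial : ℕ) : ℂ) ≠ 0 :=
    Nat.cast_ne_zero.2 (Nat.doubleFactorial_pos _).ne'
  have hE : (2*(n:ℂ) + 1 + 2) ≠ 0 := by
    have h := Nat.cast_ne_zero (R := ℂ) |>.2 (show (2*n+1+2 : ℕ) ≠ 0 by omega)
    push_cast at h; exact h
  have h1 : ((Nat.factorial 0 : ℕ) : ℂ) ≠ 0 := by norm_num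
  have hα : (2:ℂ) ^ 0 * ((Nat.factorial 0 : ℕ) : ℂ) *
      ((2 * ↑n + 1 + 2) * (((2*n+1).doubleFactorial : ℕ) : ℂ)) ≠ 0 :=
    mul_ne_zero (mul_ne_zero (pow_ne_zero _ two_ne_zero) h1) (mul_ne_zero hE hD)
  have hβ : (2:ℂ) ^ 0 * ((Nat.factorial 0 : ℕ) : ℂ) * (((2*n+1).doubleFactorial : ℕ) : ℂ) ≠ 0 :=
    mul_ne_zero (mul_ne_zero (pow_ne_zero _ two_ne_zero) h1) hD
  rw [div_eq_div_iff hα hβ]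
  ring

lemma sphT_succ_rec (n j : ℕ) (z : ℂ) :
    (2*(n:ℂ)+3) * sphT (n+1) z (j+1) - z * sphT n z (j+1) = z * sphT (n+2) z j := by
  simp only [sphT]
  have e1 : 2*(n+1)+2*(j+1)+1 = (2*n+2*j+3)+2 := by ring
  have e2 : 2*n+2*(j+1)+1 = 2*n+2*j+3 := by ring
  have e3 : 2*(n+2)+2*j+1 = (2*n+2*j+3)+2 := by ring
  rw [e1, e2, e3, Nat.doubleFactorial_add_two, Nat.factorial_succ]
  push_cast
  have hX : (↑j.factorial : ℂ) ≠ 0 := Nat.cast_ne_zero.2 (Nat.factorial_pos _).ne'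
  have hD : (((2*n+2*j+3).doubleFactorial : ℕ) : ℂ) ≠ 0 :=
    Nat.cast_ne_zero.2 (Nat.doubleFactorial_pos _).ne'
  have hj : ((j:ℂ) + 1) ≠ 0 := by
    have h := Nat.cast_ne_zero (R := ℂ) |>.2 (Nat.succ_ne_zero j)
    push_cast at h; exact h
  have hE : (2*(n:ℂ) + 2*(j:ℂ) + 3 + 2) ≠ 0 := by
    have h := Nat.cast_ne_zero (R := ℂ) |>.2 (show (2*n+2*j+3+2 : ℕ) ≠ 0 by omega)
    push_cast at h; exact h
  have h2 : (2:ℂ) ≠ 0 := two_ne_zero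
  have hα : (2:ℂ) ^ (j + 1) * ((↑j + 1) * ↑j.factorial) *
      ((2 * ↑n + 2 * ↑j + 3 + 2) * ((2 * n + 2 * j + 3).doubleFactorial : ℂ)) ≠ 0 :=
    mul_ne_zero (mul_ne_zero (pow_ne_zero _ h2) (mul_ne_zero hj hX)) (mul_ne_zero hE hD)
  have hβ : (2:ℂ) ^ (j + 1) * ((↑j + 1) * ↑j.factorial) *
      ((2 * n + 2 * j + 3).doubleFactorial : ℂ) ≠ 0 :=
    mul_ne_zero (mul_ne_zero (pow_ne_zero _ h2) (mul_ne_zero hj hX)) hD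
  have hγ : (2:ℂ) ^ j * (↑j.factorial : ℂ) *
      ((2 * ↑n + 2 * ↑j + 3 + 2) * ((2 * n + 2 * j + 3).doubleFactorial : ℂ)) ≠ 0 :=
    mul_ne_zero (mul_ne_zero (pow_ne_zero _ h2) hX) (mul_ne_zero hE hD)
  simp only [mul_div_assoc']
  rw [div_sub_div _ _ hα hβ, div_eq_div_iff (mul_ne_zero hα hβ) hγ]
  ring

lemma sphJ_rec (n : ℕ) (z : ℂ) :
    z * sphJ n z + z * sphJ (n+2) z = (2*(n:ℂ)+3) * sphJ (n+1) z := by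
  have hF : Summable (fun m => (2*(n:ℂ)+3) * sphT (n+1) z m - z * sphT n z m) :=
    ((summable_sphT (n+1) z).mul_left _).sub ((summable_sphT n z).mul_left z)
  have key : (2*(n:ℂ)+3) * sphJ (n+1) z - z * sphJ n z = z * sphJ (n+2) z := by
    have h1 : (2*(n:ℂ)+3) * sphJ (n+1) z - z * sphJ n z
        = ∑' m, ((2*(n:ℂ)+3) * sphT (n+1) z m - z * sphT n z m) := by
      rw [sphJ_eq, sphJ_eq, ← tsum_mul_left, ← tsum_mul_left,
        Summable.tsum_sub ((summable_sphT (n+1) z).mul_left _) ((summable_sphT n z).mul_left z)]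
    rw [h1, Summable.tsum_eq_zero_add hF, sphT_zero_rec, zero_add,
      tsum_congr (fun j => sphT_succ_rec n j z), tsum_mul_left, ← sphJ_eq]
  linear_combination -key

lemma sphJ_zero (z : ℂ) : z * sphJ 0 z = Complex.sin z := by
  rw [sphJ_eq, ← tsum_mul_left]
  rw [← (Complex.hasSum_sin z).tsum_eq]
  apply tsum_congr
  intro m
  simp only [sphT]
  have hfac : ((2*m+1).factorial : ℂ) = ((2*m+1).doubleFactorial : ℂ) * ((2:ℂ)^m * (m.factorial : ℂ)) := by
    have h : (2*m+1).factorial = (2*m+1).doubleFactorial * (2*m).doubleFactorial := by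
      have := Nat.factorial_eq_mul_doubleFactorial (2*m)
      simpa using this
    rw [h, Nat.doubleFactorial_two_mul]
    push_cast
    ring
  have e : 2*0+2*m+1 = 2*m+1 := by ring
  rw [e]
  have hD : (((2*m+1).doubleFactorial : ℕ) : ℂ) ≠ 0 :=
    Nat.cast_ne_zero.2 (Nat.doubleFactorial_pos _).ne'
  have hP : (2:ℂ)^m * (m.factorial : ℂ) ≠ 0 :=
    mul_ne_zero (pow_ne_zero _ two_ne_zero) (Nat.cast_ne_zero.2 (Nat.factorial_pos _).ne')
  rw [hfac]
  simp only [mul_div_assoc']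
  rw [div_eq_div_iff (mul_ne_zero hP hD) (mul_ne_zero hD hP)]
  ring

lemma sphT1_term (j : ℕ) (z : ℂ) :
    z^2 * sphT 1 z j
      = (-1:ℂ)^(j+1) * z^(2*(j+1)+1)/(((2*(j+1)+1).factorial : ℂ))
        - z * ((-1:ℂ)^(j+1) * z^(2*(j+1))/(((2*(j+1)).factorial : ℂ))) := by
  simp only [sphT]
  have e : 2*1+2*j+1 = (2*j+1)+2 := by ring
  have f0 : (2*j+1).factorial = (2*j+1).doubleFactorial * (2^j * j.factorial) := by
    have h1 := Nat.factorial_eq_mul_doubleFactorial (2*j)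
    rw [h1, Nat.doubleFactorial_two_mul]
  have f1 : (2*(j+1)+1).factorial
      = (2*j+1+2) * ((2*j+1+1) * ((2*j+1).doubleFactorial * (2^j * j.factorial))) := by
    have e1 : 2*(j+1)+1 = (2*j+1+1)+1 := by ring
    rw [e1, Nat.factorial_succ, Nat.factorial_succ, f0]
  have f2 : (2*(j+1)).factorial
      = (2*j+1+1) * ((2*j+1).doubleFactorial * (2^j * j.factorial)) := by
    have e2 : 2*(j+1) = (2*j+1)+1 := by ring
    rw [e2, Nat.factorial_succ, f0]
  rw [e, Nat.doubleFactorial_add_two, f1, f2]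
  push_cast
  have hD : (((2*j+1).doubleFactorial : ℕ) : ℂ) ≠ 0 :=
    Nat.cast_ne_zero.2 (Nat.doubleFactorial_pos _).ne'
  have hX : ((j.factorial : ℕ) : ℂ) ≠ 0 := Nat.cast_ne_zero.2 (Nat.factorial_pos _).ne'
  have h2p : (2:ℂ)^j ≠ 0 := pow_ne_zero _ two_ne_zero
  have hE1 : (2*(j:ℂ)+1+2) ≠ 0 := by
    have h := Nat.cast_ne_zero (R := ℂ) |>.2 (show (2*j+1+2 : ℕ) ≠ 0 by omega)
    push_cast at h; exact h
  have hE2 : (2*(j:ℂ)+1+1) ≠ 0 := by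
    have h := Nat.cast_ne_zero (R := ℂ) |>.2 (show (2*j+1+1 : ℕ) ≠ 0 by omega)
    push_cast at h; exact h
  have hL : (2:ℂ)^j * ((j.factorial : ℕ) : ℂ) *
      ((2*(j:ℂ)+1+2) * (((2*j+1).doubleFactorial : ℕ) : ℂ)) ≠ 0 :=
    mul_ne_zero (mul_ne_zero h2p hX) (mul_ne_zero hE1 hD)
  have hA : (2*(j:ℂ)+1+2) * ((2*(j:ℂ)+1+1) * ((((2*j+1).doubleFactorial : ℕ) : ℂ) * ((2:ℂ)^j * ((j.factorial : ℕ) : ℂ)))) ≠ 0 :=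
    mul_ne_zero hE1 (mul_ne_zero hE2 (mul_ne_zero hD (mul_ne_zero h2p hX)))
  have hB : (2*(j:ℂ)+1+1) * ((((2*j+1).doubleFactorial : ℕ) : ℂ) * ((2:ℂ)^j * ((j.factorial : ℕ) : ℂ))) ≠ 0 :=
    mul_ne_zero hE2 (mul_ne_zero hD (mul_ne_zero h2p hX))
  simp only [mul_div_assoc']
  rw [div_sub_div _ _ hA hB, div_eq_div_iff hL (mul_ne_zero hA hB)]
  ring

lemma sphJ_one (z : ℂ) : z^2 * sphJ 1 z = Complex.sin z - z * Complex.cos z := by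
  have h := (Complex.hasSum_sin z).sub ((Complex.hasSum_cos z).mul_left z)
  have e1 : Complex.sin z - z * Complex.cos z
      = ∑' (m:ℕ), ((-1:ℂ)^m * z^(2*m+1)/(((2*m+1).factorial : ℂ))
          - z * ((-1:ℂ)^m * z^(2*m)/(((2*m).factorial : ℂ)))) := h.tsum_eq.symm
  rw [e1, Summable.tsum_eq_zero_add h.summable]
  have h0 : ((-1:ℂ)^0 * z^(2*0+1)/(((2*0+1).factorial : ℂ))
      - z * ((-1:ℂ)^0 * z^(2*0)/(((2*0).factorial : ℂ)))) = 0 := by norm_num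
  rw [h0, zero_add, sphJ_eq, ← tsum_mul_left]
  exact tsum_congr (fun j => sphT1_term j z)

lemma abs_exp_mul_I (z : ℂ) : Complex.abs (Complex.exp (z*Complex.I)) = Real.exp (-z.im) := by
  rw [Complex.abs_exp']; congr 1; simp [Complex.mul_re]

lemma abs_sin_le (z : ℂ) : Complex.abs (Complex.sin z) ≤ Real.exp |z.im| := by
  rw [Complex.sin]
  have h1 : Complex.abs (Complex.exp (z*Complex.I)) ≤ Real.exp |z.im| := by
    rw [abs_exp_mul_I]; exact Real.exp_le_exp.2 (neg_le_abs _)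
  have h2 : Complex.abs (Complex.exp (-z*Complex.I)) ≤ Real.exp |z.im| := by
    rw [show -z*Complex.I = (-z)*Complex.I by ring, abs_exp_mul_I]
    simp only [Complex.neg_im, neg_neg]
    exact Real.exp_le_exp.2 (le_abs_self _)
  rw [map_div₀, map_mul, Complex.abs_I, mul_one, Complex.abs_two]
  rw [div_le_iff₀ (by norm_num : (0:ℝ) < 2)]
  calc Complex.abs (Complex.exp (-z*Complex.I) - Complex.exp (z*Complex.I))
      ≤ Complex.abs (Complex.exp (-z*Complex.I)) + Complex.abs (Complex.exp (z*Complex.I)) :=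
        AbsoluteValue.sub_le_add _ _ _
    _ ≤ Real.exp |z.im| + Real.exp |z.im| := add_le_add h2 h1
    _ = Real.exp |z.im| * 2 := by ring

lemma abs_cos_le (z : ℂ) : Complex.abs (Complex.cos z) ≤ Real.exp |z.im| := by
  rw [Complex.cos]
  have h1 : Complex.abs (Complex.exp (z*Complex.I)) ≤ Real.exp |z.im| := by
    rw [abs_exp_mul_I]; exact Real.exp_le_exp.2 (neg_le_abs _)
  have h2 : Complex.abs (Complex.exp (-z*Complex.I)) ≤ Real.exp |z.im| := by
    rw [show -z*Complex.I = (-z)*Complex.I by ring, abs_exp_mul_I]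
    simp only [Complex.neg_im, neg_neg]
    exact Real.exp_le_exp.2 (le_abs_self _)
  rw [map_div₀, Complex.abs_two, div_le_iff₀ (by norm_num : (0:ℝ) < 2)]
  calc Complex.abs (Complex.exp (z*Complex.I) + Complex.exp (-z*Complex.I))
      ≤ Complex.abs (Complex.exp (z*Complex.I)) + Complex.abs (Complex.exp (-z*Complex.I)) :=
        AbsoluteValue.add_le _ _ _
    _ ≤ Real.exp |z.im| + Real.exp |z.im| := add_le_add h1 h2
    _ = Real.exp |z.im| * 2 := by ring

lemma sphJ_decay (n : ℕ) : ∃ K : ℝ, 0 < K ∧ ∀ z : ℂ, 1 ≤ Complex.abs z →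
    Complex.abs (sphJ n z) ≤ K * Real.exp |z.im| / Complex.abs z := by
  suffices h : ∀ m : ℕ,
      (∃ K : ℝ, 0 < K ∧ ∀ z : ℂ, 1 ≤ Complex.abs z →
        Complex.abs (sphJ m z) ≤ K * Real.exp |z.im| / Complex.abs z) ∧
      (∃ K : ℝ, 0 < K ∧ ∀ z : ℂ, 1 ≤ Complex.abs z →
        Complex.abs (sphJ (m+1) z) ≤ K * Real.exp |z.im| / Complex.abs z) by
    exact (h n).1
  intro m
  induction m with
  | zero =>
    constructor
    · refine ⟨1, one_pos, fun z hz => ?_⟩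
      have hz0 : z ≠ 0 := by
        intro h; rw [h] at hz; simp at hz; linarith
      have hA : (0:ℝ) < Complex.abs z := lt_of_lt_of_le one_pos hz
      have h0 : sphJ 0 z = Complex.sin z / z := by
        rw [eq_div_iff hz0, mul_comm]; exact sphJ_zero z
      rw [h0, map_div₀, one_mul]
      exact div_le_div₀ (Real.exp_nonneg _) (abs_sin_le z) hA le_rfl
    · refine ⟨2, by norm_num, fun z hz => ?_⟩
      have hz0 : z ≠ 0 := by
        intro h; rw [h] at hz; simp at hz; linarith
      have hA : (0:ℝ) < Complex.abs z := lt_of_lt_of_le one_pos hz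
      have h1 : sphJ (0+1) z = (Complex.sin z - z * Complex.cos z) / z^2 := by
        rw [eq_div_iff (pow_ne_zero 2 hz0), mul_comm]; exact sphJ_one z
      rw [h1, map_div₀, map_pow]
      rw [div_le_div_iff₀ (by positivity) hA]
      have hs : Complex.abs (Complex.sin z - z * Complex.cos z)
          ≤ Real.exp |z.im| + Complex.abs z * Real.exp |z.im| := by
        calc Complex.abs (Complex.sin z - z * Complex.cos z)
            ≤ Complex.abs (Complex.sin z) + Complex.abs (z * Complex.cos z) :=
              AbsoluteValue.sub_le_add _ _ _
          _ ≤ Real.exp |z.im| + Complex.abs z * Real.exp |z.im| := by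
              rw [map_mul]
              exact add_le_add (abs_sin_le z)
                (mul_le_mul_of_nonneg_left (abs_cos_le z) (Complex.abs.nonneg z))
      have h' := mul_le_mul_of_nonneg_right hs hA.le
      nlinarith [h', hz, mul_nonneg (Real.exp_pos |z.im|).le hA.le]
  | succ m ih =>
    refine ⟨ih.2, ?_⟩
    obtain ⟨K₁, hK₁, H₁⟩ := ih.1
    obtain ⟨K₂, hK₂, H₂⟩ := ih.2
    refine ⟨(2*m+3) * K₂ + K₁, by positivity, fun z hz => ?_⟩
    have hz0 : z ≠ 0 := by
      intro h; rw [h] at hz; simp at hz; linarith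
    have hA : (0:ℝ) < Complex.abs z := lt_of_lt_of_le one_pos hz
    set A := Complex.abs z with hAdef
    set E := Real.exp |z.im| with hEdef
    have hE : (0:ℝ) < E := Real.exp_pos _
    have hrec : sphJ (m+2) z = ((2*(m:ℂ)+3) * sphJ (m+1) z - z * sphJ m z) / z := by
      rw [eq_div_iff hz0]
      linear_combination sphJ_rec m z
    have habs : Complex.abs ((2*(m:ℂ)+3) * sphJ (m+1) z - z * sphJ m z)
        ≤ (2*m+3) * (K₂ * E / A) + A * (K₁ * E / A) := by
      calc Complex.abs ((2*(m:ℂ)+3) * sphJ (m+1) z - z * sphJ m z)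
          ≤ Complex.abs ((2*(m:ℂ)+3) * sphJ (m+1) z) + Complex.abs (z * sphJ m z) :=
            AbsoluteValue.sub_le_add _ _ _
        _ ≤ (2*m+3) * (K₂ * E / A) + A * (K₁ * E / A) := by
            rw [map_mul, map_mul]
            have hc : Complex.abs (2*(m:ℂ)+3) = (2*m+3 : ℝ) := by
              have : (2*(m:ℂ)+3) = ((2*m+3 : ℕ) : ℂ) := by push_cast; ring
              rw [this, Complex.abs_natCast]; push_cast; ring
            rw [hc]
            exact add_le_add
              (mul_le_mul_of_nonneg_left (H₂ z hz) (by positivity))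
              (mul_le_mul_of_nonneg_left (H₁ z hz) (Complex.abs.nonneg z))
    rw [show m+1+1 = m+2 by ring, hrec, map_div₀]
    rw [div_le_div_iff₀ hA hA]
    have e1 : K₂ * E / A ≤ K₂ * E := div_le_self (by positivity) hz
    have e2 : A * (K₁ * E / A) = K₁ * E := by field_simp
    calc Complex.abs ((2*(m:ℂ)+3) * sphJ (m+1) z - z * sphJ m z) * A
        ≤ ((2*m+3) * (K₂ * E) + K₁ * E) * A := by
          refine mul_le_mul_of_nonneg_right ?_ (le_of_lt hA)
          rw [e2] at habs
          calc Complex.abs ((2*(m:ℂ)+3) * sphJ (m+1) z - z * sphJ m z)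
              ≤ (2*m+3) * (K₂ * E / A) + K₁ * E := habs
            _ ≤ (2*m+3) * (K₂ * E) + K₁ * E := by
                have : (0:ℝ) ≤ 2*m+3 := by positivity
                nlinarith [e1]
      _ = ((2*m+3) * K₂ + K₁) * E * A := by ring

lemma two_pow_le_factorial_succ (j : ℕ) : 2^j ≤ (j+1).factorial := by
  induction j with
  | zero => norm_num
  | succ j ih =>
    rw [pow_succ, Nat.factorial_succ]
    calc 2^j * 2 ≤ (j+1).factorial * 2 := Nat.mul_le_mul_right _ ih
      _ ≤ (j+1+1) * (j+1).factorial := by nlinarith [Nat.factorial_pos (j+1)]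

lemma dfac_mono (n k : ℕ) : (2*n+1).doubleFactorial ≤ (2*n+2*k+1).doubleFactorial := by
  induction k with
  | zero => exact Nat.le_of_eq (by norm_num)
  | succ k ih =>
    have e : 2*n+2*(k+1)+1 = (2*n+2*k+1)+2 := by ring
    rw [e, Nat.doubleFactorial_add_two]
    exact le_trans ih (Nat.le_mul_of_pos_left _ (by omega))

lemma norm_sphT_one_succ_le (n j : ℕ) :
    ‖sphT n 1 (j+1)‖ ≤ (1/(((2*n+1).doubleFactorial : ℕ) : ℝ)) * ((1/2) * (1/4)^j) := by
  rw [norm_sphT]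
  simp only [map_one, one_pow]
  have hnat : ((2*n+1).doubleFactorial) * (2 * 4^j) ≤ 2^(j+1) * ((j+1).factorial) * ((2*n+2*(j+1)+1).doubleFactorial) := by
    have h1 : (2:ℕ) * 4^j ≤ 2^(j+1) * ((j+1).factorial) := by
      have : (4:ℕ)^j = 2^j * 2^j := by rw [← mul_pow]; norm_num
      rw [this, pow_succ]
      calc 2 * (2^j * 2^j) = (2^j * 2) * 2^j := by ring
        _ ≤ (2^j * 2) * (j+1).factorial := Nat.mul_le_mul_left _ (two_pow_le_factorial_succ j)
    calc ((2*n+1).doubleFactorial) * (2 * 4^j)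
        ≤ ((2*n+2*(j+1)+1).doubleFactorial) * (2^(j+1) * ((j+1).factorial)) :=
          Nat.mul_le_mul (dfac_mono n (j+1)) h1
      _ = 2^(j+1) * ((j+1).factorial) * ((2*n+2*(j+1)+1).doubleFactorial) := by ring
  have e : (1/(((2*n+1).doubleFactorial : ℕ) : ℝ)) * ((1/2) * (1/4)^j)
      = 1 / ((((2*n+1).doubleFactorial : ℕ) : ℝ) * (2 * 4^j)) := by
    field_simp
    rw [← mul_pow]; norm_num
  rw [e]
  have h2 : (0:ℝ) < (((2*n+1).doubleFactorial : ℕ) : ℝ) * (2 * 4^j) := by positivity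
  rw [div_le_div_iff₀ (by positivity) h2, one_mul]
  calc (((2*n+1).doubleFactorial : ℕ) : ℝ) * (2 * 4^j)
      ≤ ((2:ℝ)^(j+1) * (((j+1).factorial : ℕ) : ℝ) * (((2*n+2*(j+1)+1).doubleFactorial : ℕ) : ℝ)) := by
        exact_mod_cast Nat.cast_le.2 hnat
    _ = 1 * ((2:ℝ)^(j+1) * (((j+1).factorial : ℕ) : ℝ) * (((2*n+2*(j+1)+1).doubleFactorial : ℕ) : ℝ)) := by ring

set_option maxHeartbeats 1000000 in
lemma sphJ_one_lower (n : ℕ) :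
    (1/3 : ℝ) / (((2*n+1).doubleFactorial : ℕ) : ℝ) ≤ Complex.abs (sphJ n 1) := by
  have hsum := summable_sphT n 1
  have h : sphJ n 1 = sphT n 1 0 + ∑' j, sphT n 1 (j+1) := by
    rw [sphJ_eq]; exact Summable.tsum_eq_zero_add hsum
  set D : ℝ := (((2*n+1).doubleFactorial : ℕ) : ℝ) with hDdef
  have hD : (0:ℝ) < D := by
    rw [hDdef]; exact_mod_cast Nat.doubleFactorial_pos _
  have h0 : ‖sphT n 1 0‖ = 1/D := by
    rw [norm_sphT]
    norm_num
    exact hDdef.symm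
  have hshift : Summable (fun j => ‖sphT n 1 (j+1)‖) :=
    (summable_nat_add_iff 1).2 (summable_norm_sphT n 1)
  have hgeo : Summable (fun j : ℕ => (1/D) * ((1/2) * (1/4:ℝ)^j)) := by
    exact ((summable_geometric_of_lt_one (by norm_num) (by norm_num)).mul_left _).mul_left _
  have htail : ‖∑' j, sphT n 1 (j+1)‖ ≤ (2/3) * (1/D) := by
    calc ‖∑' j, sphT n 1 (j+1)‖ ≤ ∑' j, ‖sphT n 1 (j+1)‖ :=
          norm_tsum_le_tsum_norm hshift
      _ ≤ ∑' j, (1/D) * ((1/2) * (1/4:ℝ)^j) :=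
          Summable.tsum_le_tsum (fun j => norm_sphT_one_succ_le n j) hshift hgeo
      _ = (1/D) * ((1/2) * (1-(1/4:ℝ))⁻¹) := by
          rw [tsum_mul_left, tsum_mul_left, tsum_geometric_of_lt_one (by norm_num) (by norm_num)]
      _ = (2/3) * (1/D) := by norm_num; ring
  have hnorm : 1/D - (2/3) * (1/D) ≤ ‖sphJ n 1‖ := by
    have h1 : ‖sphT n 1 0‖ ≤ ‖sphJ n 1‖ + ‖∑' j, sphT n 1 (j+1)‖ := by
      calc ‖sphT n 1 0‖ = ‖sphJ n 1 - ∑' j, sphT n 1 (j+1)‖ := by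
            rw [h]; congr 1; ring
        _ ≤ ‖sphJ n 1‖ + ‖∑' j, sphT n 1 (j+1)‖ := norm_sub_le _ _
    rw [h0] at h1
    linarith
  rw [← Complex.norm_eq_abs]
  calc (1/3 : ℝ)/D = 1/D - (2/3) * (1/D) := by ring
    _ ≤ ‖sphJ n 1‖ := hnorm

lemma continuousAt_sphJ_one (n : ℕ) : ContinuousAt (sphJ n) 1 := by
  have hc : ContinuousOn (fun z => ∑' m, sphT n z m) (Metric.ball (0:ℂ) 2) := by
    apply continuousOn_tsum (u := fun m => ‖sphT n 2 m‖)
    · intro m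
      exact (((continuous_const.mul (continuous_pow _)).div_const _)).continuousOn
    · exact summable_norm_sphT n 2
    · intro m x hx
      rw [norm_sphT, norm_sphT]
      have hx2 : Complex.abs x ≤ Complex.abs 2 := by
        rw [Metric.mem_ball, dist_zero_right, Complex.norm_eq_abs] at hx
        have : Complex.abs 2 = 2 := Complex.abs_two
        rw [this]; exact hx.le
      gcongr
  have : ContinuousOn (sphJ n) (Metric.ball (0:ℂ) 2) := hc
  apply this.continuousAt
  apply Metric.isOpen_ball.mem_nhds
  rw [Metric.mem_ball, dist_zero_right, Complex.norm_eq_abs]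
  norm_num

lemma abs_sphJ_le_tsum (n : ℕ) (u w : ℂ) (h : Complex.abs u ≤ Complex.abs w) :
    Complex.abs (sphJ n u) ≤ ∑' m, ‖sphT n w m‖ := by
  rw [← Complex.norm_eq_abs, sphJ_eq]
  calc ‖∑' m, sphT n u m‖ ≤ ∑' m, ‖sphT n u m‖ :=
        norm_tsum_le_tsum_norm (summable_norm_sphT n u)
    _ ≤ ∑' m, ‖sphT n w m‖ := by
        apply Summable.tsum_le_tsum _ (summable_norm_sphT n u) (summable_norm_sphT n w)
        intro m
        rw [norm_sphT, norm_sphT]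
        gcongr

set_option maxHeartbeats 1000000 in
/-- localization of the TE propagating functions near the origin. -/
theorem stmt9 (n : ℕ) (hn : 1 ≤ n) (k : ℝ) (hk : 0 < k) (a : ℝ) (ha : a ∈ Set.Ioo (0 : ℝ) 1)
    (C : ℝ) (hC : 0 < C) (L₀ : ℕ) (z : ℕ → ℂ)
    (hz : ∀ l : ℕ, L₀ ≤ l → f1 n k (z l) = 0 ∧ ‖z l - zt1 n l‖ ≤ C / l) :
    ∃ C' > (0 : ℝ), ∃ L : ℕ, L₀ ≤ L ∧ ∀ l : ℕ, L ≤ l →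
      sSup ((fun t : ℝ => ‖sphJ n (z l * (t : ℂ))‖) '' Set.Icc a 1) ≤
        (C' / l) * sSup ((fun t : ℝ => ‖sphJ n (z l * (t : ℂ))‖) '' Set.Icc 0 1) := by
  obtain ⟨ha0, ha1⟩ := ha
  obtain ⟨K, hK, hdecay⟩ := sphJ_decay n
  set c : ℝ := (1/3 : ℝ) / (((2*n+1).doubleFactorial : ℕ) : ℝ) with hcdef
  have hc : 0 < c := div_pos (by norm_num) (Nat.cast_pos.2 (Nat.doubleFactorial_pos _))
  have hcont := continuousAt_sphJ_one n
  rw [Metric.continuousAt_iff] at hcont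
  obtain ⟨δ, hδpos, hδ⟩ := hcont (c/2) (by positivity)
  obtain ⟨M, hM⟩ := exists_nat_gt (max (max (C + 1) (2/a)) (C/δ + 1))
  refine ⟨3*K/(a*c), by positivity, max L₀ (M + 1), le_max_left _ _, ?_⟩
  intro l hl
  have hlM : (M:ℝ) + 1 ≤ (l:ℝ) := by exact_mod_cast le_trans (le_max_right _ _) hl
  have hlC : C + 1 < (l:ℝ) := by
    have := le_of_lt (lt_of_le_of_lt (le_max_left _ _) (lt_of_le_of_lt (le_max_left _ _) hM))
    linarith [this]
  have hla : 2/a < (l:ℝ) := by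
    have := lt_of_le_of_lt (le_max_right _ _) (lt_of_le_of_lt (le_max_left _ _) hM)
    linarith
  have hlδ : C/δ + 1 < (l:ℝ) + 1 := by
    have := lt_of_le_of_lt (le_max_right _ _) hM
    linarith
  have hl1 : (1:ℝ) ≤ (l:ℝ) := by nlinarith
  have hl0 : (0:ℝ) < (l:ℝ) := by linarith
  set w : ℂ := z l with hwdef
  have hzl : Complex.abs (w - zt1 n l) ≤ C / l :=
    (hz l (le_trans (le_max_left _ _) hl)).2
  -- basic geometry of w
  have hzt_re : (zt1 n l).re = ((1 + 2*l + n : ℕ) : ℝ) * Real.pi / 2 := by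
    simp [zt1]
  have hzt_im : (zt1 n l).im = 0 := by simp [zt1]
  have hCl : C / (l:ℝ) < 1 := by
    rw [div_lt_one hl0]; linarith
  have him : |w.im| ≤ C / l := by
    have h1 : (w - zt1 n l).im = w.im := by rw [Complex.sub_im, hzt_im]; ring
    calc |w.im| = |(w - zt1 n l).im| := by rw [h1]
      _ ≤ Complex.abs (w - zt1 n l) := Complex.abs_im_le_norm _
      _ ≤ C / l := hzl
  have hre : 2*(l:ℝ) ≤ w.re := by
    have h1 : (zt1 n l).re - w.re ≤ |(w - zt1 n l).re| := by
      rw [Complex.sub_re]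
      rw [abs_sub_comm]
      exact le_abs_self _
    have h2 : |(w - zt1 n l).re| ≤ C / l := le_trans (Complex.abs_re_le_norm _) hzl
    have h3 : (3:ℝ) ≤ Real.pi := by linarith [Real.pi_gt_three]
    have h4 : ((1 + 2*l + n : ℕ) : ℝ) ≥ 1 + 2*(l:ℝ) := by push_cast; linarith [Nat.cast_nonneg (α := ℝ) n]
    have h5 : (zt1 n l).re ≥ (1 + 2*(l:ℝ)) * 3 / 2 := by
      rw [hzt_re]
      have : ((1 + 2*l + n : ℕ) : ℝ) * 3 ≤ ((1 + 2*l + n : ℕ) : ℝ) * Real.pi :=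
        mul_le_mul_of_nonneg_left h3 (Nat.cast_nonneg _)
      have h6 : (1 + 2*(l:ℝ)) * 3 ≤ ((1 + 2*l + n : ℕ) : ℝ) * 3 := by nlinarith
      linarith
    nlinarith [hCl]
  have habsw : 2*(l:ℝ) ≤ Complex.abs w := le_trans hre (Complex.re_le_norm w)
  have hwre_pos : 0 < w.re := by linarith
  -- lower bound on sup over [0,1]
  set t₀ : ℝ := 1 / w.re with ht₀def
  have ht₀mem : t₀ ∈ Set.Icc (0:ℝ) 1 := by
    constructor
    · positivity
    · rw [div_le_one hwre_pos]; linarith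
  set u : ℂ := w * ((t₀ : ℝ) : ℂ) with hudef
  have hwt : ((w.re:ℝ):ℂ) * ((t₀:ℝ):ℂ) = 1 := by
    rw [← Complex.ofReal_mul, show w.re * t₀ = 1 by rw [ht₀def, mul_one_div, div_self hwre_pos.ne']]
    exact Complex.ofReal_one
  have hu1 : u - 1 = ((t₀ : ℝ) : ℂ) * (Complex.I * (w.im : ℝ)) := by
    calc u - 1 = (↑w.re + ↑w.im * Complex.I) * ↑t₀ - 1 := by rw [hudef, Complex.re_add_im]
      _ = ↑w.re * ↑t₀ - 1 + ↑t₀ * (Complex.I * ↑w.im) := by ring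
      _ = ↑t₀ * (Complex.I * ↑w.im) := by rw [hwt]; ring
  have hdist : dist u 1 < δ := by
    rw [Complex.dist_eq, hu1]
    rw [Complex.norm_eq_abs, map_mul, map_mul, Complex.abs_I, Complex.abs_ofReal, Complex.abs_ofReal, one_mul]
    have h1 : |t₀| = t₀ := abs_of_nonneg ht₀mem.1
    have h2 : t₀ ≤ 1 := ht₀mem.2
    have h3 : |w.im| < δ := by
      have : C / (l:ℝ) < δ := by
        rw [div_lt_iff₀ hl0]
        have h4 : C < (l:ℝ)*δ := (div_lt_iff₀ hδpos).1 (by linarith)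
        nlinarith [h4]
      linarith [him]
    rw [h1]
    nlinarith [abs_nonneg w.im, ht₀mem.1]
  have hulow : c/2 ≤ Complex.abs (sphJ n u) := by
    have h1 := hδ hdist
    rw [Complex.dist_eq, Complex.norm_eq_abs] at h1
    have h2 : Complex.abs (sphJ n 1) ≤ Complex.abs (sphJ n u) + Complex.abs (sphJ n u - sphJ n 1) := by
      calc Complex.abs (sphJ n 1) = Complex.abs (sphJ n u - (sphJ n u - sphJ n 1)) := by ring_nf
        _ ≤ _ := AbsoluteValue.sub_le_add _ _ _
    have h3 := sphJ_one_lower n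
    rw [← hcdef] at h3
    linarith
  have hBdd : BddAbove ((fun t : ℝ => Complex.abs (sphJ n (w * (t : ℂ)))) '' Set.Icc 0 1) := by
    refine ⟨∑' m, ‖sphT n w m‖, ?_⟩
    rintro y ⟨t, ht, rfl⟩
    apply abs_sphJ_le_tsum
    rw [map_mul, Complex.abs_ofReal]
    have : |t| ≤ 1 := by rw [_root_.abs_of_nonneg ht.1]; exact ht.2
    nlinarith [Complex.abs.nonneg w]
  have hsup01 : c/2 ≤ sSup ((fun t : ℝ => Complex.abs (sphJ n (w * (t : ℂ)))) '' Set.Icc 0 1) := by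
    refine le_trans hulow (le_csSup hBdd ?_)
    exact ⟨t₀, ht₀mem, rfl⟩
  -- upper bound on sup over [a,1]
  have hupper : ∀ t ∈ Set.Icc a 1, Complex.abs (sphJ n (w * (t : ℂ))) ≤ 3*K/(2*a*(l:ℝ)) := by
    intro t ht
    have hta : a ≤ t := ht.1
    have ht1 : t ≤ 1 := ht.2
    have htpos : 0 < t := lt_of_lt_of_le ha0 hta
    set v : ℂ := w * ((t : ℝ) : ℂ) with hvdef
    have habsv : Complex.abs v = Complex.abs w * t := by
      rw [hvdef, map_mul, Complex.abs_ofReal, abs_of_pos htpos]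
    have hv1 : 1 ≤ Complex.abs v := by
      rw [habsv]
      have h7 : 2*(l:ℝ)*a ≤ Complex.abs w * t := by
        apply mul_le_mul habsw hta (le_of_lt ha0) (Complex.abs.nonneg w)
      have h6 : 2 < (l:ℝ)*a := (div_lt_iff₀ ha0).1 hla
      nlinarith [h6, h7]
    have hvim : |v.im| ≤ 1 := by
      have h1 : v.im = w.im * t := by
        rw [hvdef]; simp [Complex.mul_im, Complex.ofReal_re, Complex.ofReal_im]
      rw [h1, abs_mul, abs_of_pos htpos]
      have := him
      nlinarith [abs_nonneg w.im, hCl, hl0]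
    have h2 := hdecay v hv1
    have hexp : Real.exp |v.im| ≤ 3 := by
      calc Real.exp |v.im| ≤ Real.exp 1 := Real.exp_le_exp.2 hvim
        _ ≤ 3 := by linarith [Real.exp_one_lt_d9]
    have hvlarge : a * (2*(l:ℝ)) ≤ Complex.abs v := by
      rw [habsv]
      calc a * (2*(l:ℝ)) ≤ t * Complex.abs w := by
            apply mul_le_mul hta habsw (by positivity) (by linarith)
        _ = Complex.abs w * t := by ring
    calc Complex.abs (sphJ n v) ≤ K * Real.exp |v.im| / Complex.abs v := h2
      _ ≤ 3*K/(2*a*(l:ℝ)) := by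
          rw [div_le_div_iff₀ (lt_of_lt_of_le zero_lt_one hv1) (by positivity)]
          have h4 : K * Real.exp |v.im| ≤ 3*K := by nlinarith
          have h5 : 2*a*(l:ℝ) ≤ Complex.abs v := by nlinarith [hvlarge]
          nlinarith [mul_le_mul h4 h5 (by positivity) (by positivity)]
  have hsupa1 : sSup ((fun t : ℝ => Complex.abs (sphJ n (w * (t : ℂ)))) '' Set.Icc a 1)
      ≤ 3*K/(2*a*(l:ℝ)) := by
    apply Real.sSup_le
    · rintro y ⟨t, ht, rfl⟩
      exact hupper t ht
    · positivity
  calc sSup ((fun t : ℝ => Complex.abs (sphJ n (w * (t : ℂ)))) '' Set.Icc a 1)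
      ≤ 3*K/(2*a*(l:ℝ)) := hsupa1
    _ = (3*K/(a*c) / (l:ℝ)) * (c/2) := by
        field_simp
    _ ≤ (3*K/(a*c) / (l:ℝ)) * sSup ((fun t : ℝ => Complex.abs (sphJ n (w * (t : ℂ)))) '' Set.Icc 0 1) :=
        mul_le_mul_of_nonneg_left hsup01 (by positivity)
end

section
/- Fix an integer n ≥ 1 and constants M > 0 and C > 0. (i) If (z_l)_{l ≥ 1} are complex numbers with |Im z_l| ≤ M and |z_l − z̃¹_{n,l}| ≤ C/l for all l ≥ 1, then there exists C′ > 0 such that for every l ≥ 1 and every t ∈ [0,1], |j_n(z_l t) − j_n(z̃¹_{n,l} t)| ≤ C′/l. (ii) Let g_n(w) := 𝒥_n(w)/w, extended through its removable singularity at w = 0 to an entire function. If (z_l)_{l ≥ 1} are complex numbers with |Im z_l| ≤ M and |z_l − z̃²_{n,l}| ≤ C/l for all l ≥ 1, then there exists C′ > 0 such that for every l ≥ 1 and every t ∈ [0,1], |g_n(z_l t) − g_n(z̃²_{n,l} t)| ≤ C′/l. -/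
open Complex Real Filter

section Aux
open Polynomial Nat


noncomputable def term (n m : ℕ) (z : ℂ) : ℂ :=
  ((-1 : ℂ) ^ m * z ^ (n + 2 * m)) /
    ((2 : ℂ) ^ m * (m.factorial : ℂ) * (Nat.doubleFactorial (2 * n + 2 * m + 1) : ℂ))

lemma denom_ne_zero (n m : ℕ) :
    ((2 : ℂ) ^ m * (m.factorial : ℂ) * (((2*n+2*m+1)‼ : ℕ) : ℂ)) ≠ 0 := by
  refine mul_ne_zero (mul_ne_zero (pow_ne_zero _ two_ne_zero) ?_) ?_
  · exact_mod_cast Nat.cast_ne_zero.mpr m.factorial_ne_zero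
  · exact_mod_cast Nat.cast_ne_zero.mpr (Nat.doubleFactorial_pos _).ne'

lemma norm_term_le (n m : ℕ) (z : ℂ) :
    ‖term n m z‖ ≤ ‖z‖ ^ n * (‖z‖ ^ 2) ^ m / m.factorial := by
  have key : ‖term n m z‖
      = ‖z‖ ^ (n + 2*m) / ((2^m * m.factorial * (2*n+2*m+1)‼ : ℕ) : ℝ) := by
    unfold term
    rw [norm_div]
    congr 1
    · simp
    · have : ((2 : ℂ) ^ m * (m.factorial : ℂ) * (((2*n+2*m+1)‼ : ℕ) : ℂ))
          = (((2^m * m.factorial * (2*n+2*m+1)‼ : ℕ) : ℕ) : ℂ) := by push_cast; ring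
      rw [this, Complex.norm_natCast]
  rw [key, pow_add, pow_mul]
  have hle : (m.factorial : ℝ) ≤ ((2^m * m.factorial * (2*n+2*m+1)‼ : ℕ) : ℝ) := by
    have : m.factorial ≤ 2^m * m.factorial * (2*n+2*m+1)‼ := by
      calc m.factorial ≤ 2^m * m.factorial :=
            Nat.le_mul_of_pos_left _ (by positivity)
        _ ≤ _ := Nat.le_mul_of_pos_right _ (Nat.doubleFactorial_pos _)
    exact_mod_cast this
  gcongr

lemma summable_term (n : ℕ) (z : ℂ) : Summable (fun m => term n m z) := by
  apply Summable.of_norm_bounded ?_ (fun m => norm_term_le n m z)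
  simpa [mul_div_assoc] using (Real.summable_pow_div_factorial (‖z‖ ^ 2)).mul_left
    (‖z‖ ^ n)

lemma hasSum_term (n : ℕ) (z : ℂ) : HasSum (fun m => term n m z) (sphJ n z) :=
  (summable_term n z).hasSum

lemma term_differentiable (n m : ℕ) : Differentiable ℂ (fun z => term n m z) := by
  unfold term
  exact (differentiable_pow _).const_mul _ |>.div_const _

lemma sphJ_differentiable (n : ℕ) : Differentiable ℂ (sphJ n) := by
  intro z0
  have hU : IsOpen (Metric.ball (0:ℂ) (‖z0‖ + 1)) := Metric.isOpen_ball
  have h := differentiableOn_tsum_of_summable_norm (u := fun m =>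
      (‖z0‖ + 1) ^ n * ((‖z0‖ + 1) ^ 2) ^ m / m.factorial)
      (F := fun m w => term n m w) ?_ (fun m => (term_differentiable n m).differentiableOn) hU ?_
  · have : DifferentiableAt ℂ (fun w => ∑' m, term n m w) z0 := by
      apply h.differentiableAt (hU.mem_nhds ?_)
      simp [Metric.mem_ball, Complex.dist_eq]
    exact this.congr_of_eventuallyEq (by filter_upwards with w; rfl)
  · simpa [mul_div_assoc] using (Real.summable_pow_div_factorial ((‖z0‖ + 1) ^ 2)).mul_left
      ((‖z0‖ + 1) ^ n)
  · intro m w hw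
    refine (norm_term_le n m w).trans ?_
    have hw' : ‖w‖ ≤ ‖z0‖ + 1 := by
      have := Metric.mem_ball.mp hw
      rw [Complex.dist_eq, sub_zero] at this
      exact this.le
    have h0 : (0:ℝ) ≤ ‖w‖ := norm_nonneg w
    have h1 : ‖w‖ ^ n ≤ (‖z0‖ + 1) ^ n := pow_le_pow_left₀ h0 hw' n
    have h2 : (‖w‖ ^ 2) ^ m ≤ ((‖z0‖ + 1) ^ 2) ^ m :=
      pow_le_pow_left₀ (by positivity) (pow_le_pow_left₀ h0 hw' 2) m
    have := mul_le_mul h1 h2 (by positivity) (by positivity)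
    exact div_le_div_of_nonneg_right this (by positivity)


noncomputable def pq : ℕ → Polynomial ℂ × Polynomial ℂ
  | 0 => (1, 0)
  | 1 => (1, -Polynomial.X)
  | n + 2 => ((2*(n:ℂ)+3) • (pq (n+1)).1 - Polynomial.X^2 * (pq n).1,
              (2*(n:ℂ)+3) • (pq (n+1)).2 - Polynomial.X^2 * (pq n).2)

noncomputable def Wf (n : ℕ) (z : ℂ) : ℂ :=
  ((pq n).1.eval z) * Complex.sin z + ((pq n).2.eval z) * Complex.cos z

lemma Wf_zero (z : ℂ) : Wf 0 z = Complex.sin z := by simp [Wf, pq]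

lemma Wf_one (z : ℂ) : Wf 1 z = Complex.sin z - z * Complex.cos z := by simp [Wf, pq]; ring

lemma Wf_rec (n : ℕ) (z : ℂ) :
    Wf (n+2) z = (2*(n:ℂ)+3) * Wf (n+1) z - z^2 * Wf n z := by
  simp [Wf, pq]; ring

lemma pq_deg : ∀ n : ℕ, (pq n).1.natDegree ≤ n ∧ (pq n).2.natDegree ≤ n
  | 0 => by simp [pq]
  | 1 => by simp [pq]
  | n + 2 => by
    obtain ⟨h0a, h0b⟩ := pq_deg n
    obtain ⟨h1a, h1b⟩ := pq_deg (n+1)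
    constructor
    · simp only [pq]
      refine (Polynomial.natDegree_sub_le _ _).trans (max_le ?_ ?_)
      · exact (Polynomial.natDegree_smul_le _ _).trans (h1a.trans (by omega))
      · refine (Polynomial.natDegree_mul_le).trans ?_
        have : (Polynomial.X ^ 2 : Polynomial ℂ).natDegree ≤ 2 := by
          simpa using Polynomial.natDegree_X_pow_le (R := ℂ) 2
        omega
    · simp only [pq]
      refine (Polynomial.natDegree_sub_le _ _).trans (max_le ?_ ?_)
      · exact (Polynomial.natDegree_smul_le _ _).trans (h1b.trans (by omega))
      · refine (Polynomial.natDegree_mul_le).trans ?_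
        have : (Polynomial.X ^ 2 : Polynomial ℂ).natDegree ≤ 2 := by
          simpa using Polynomial.natDegree_X_pow_le (R := ℂ) 2
        omega

lemma dfac_cast_odd (m : ℕ) :
    (((2*m+1)! : ℕ) : ℂ) = (2:ℂ)^m * (m.factorial : ℂ) * (((2*m+1)‼ : ℕ) : ℂ) := by
  have h : ((2*m+1)! : ℕ) = 2^m * m.factorial * (2*m+1)‼ := by
    rw [Nat.factorial_eq_mul_doubleFactorial, Nat.doubleFactorial_two_mul]; ring
  exact_mod_cast h


lemma helper1 (s a z G w P Q : ℂ) (hz : z ≠ 0) (hG : G ≠ 0) (hw : w ≠ 0) (hP : P ≠ 0)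
    (hQ : Q ≠ 0) (hPQ : P = Q + 1) :
    (-s * (a*z^3) / (P*Q*(G*w)) - z * (-s * (a*z^2) / (Q*(G*w)))) / z^2 = s * (a*z) / (G*(P*w)) := by
  have hD : P * Q * (G * w) * (Q * (G * w)) * z ^ 2 ≠ 0 := by
    simp [hP, hQ, hG, hw, hz, pow_eq_zero_iff]
  subst hPQ
  field_simp
  ring

lemma helper2 (s b z G T R S v : ℂ) (hz : z ≠ 0) (hG : G ≠ 0) (hT : T ≠ 0) (hR : R ≠ 0)
    (hv : v ≠ 0) (hrel : R = S + 2*T) :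
    S/z * (-s * (b*z) / (2*T*G*(R*v))) - (-s * b / (2*T*G*v)) = s * b / (G*(R*v)) := by
  have hD : z * (2*T*G*(R*v)) ≠ 0 := by
    simp [hz, hT, hG, hR, hv]
  field_simp
  linear_combination (s*b) * hrel

lemma fact_odd (m : ℕ) : (2*m+1)! = 2^m * m.factorial * (2*m+1)‼ := by
  rw [Nat.factorial_eq_mul_doubleFactorial, Nat.doubleFactorial_two_mul]; ring

lemma hasSum_W : ∀ (n : ℕ) (z : ℂ), z ≠ 0 → HasSum (fun m => term n m z) (Wf n z / z ^ (n + 1))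
  | 0, z, hz => by
    have hs := (Complex.hasSum_sin z).div_const z
    have heq : (fun m : ℕ => ((-1:ℂ)^m * z^(2*m+1) / ((2*m+1)! : ℂ)) / z)
        = fun m => term 0 m z := by
      funext m
      unfold term
      rw [show 2*0+2*m+1 = 2*m+1 by ring, show 0+2*m = 2*m by ring, dfac_cast_odd]
      have d1 : (2:ℂ)^m ≠ 0 := pow_ne_zero _ two_ne_zero
      have d2 : (m.factorial : ℂ) ≠ 0 := Nat.cast_ne_zero.mpr m.factorial_ne_zero
      have d3 : (((2*m+1)‼ : ℕ) : ℂ) ≠ 0 := Nat.cast_ne_zero.mpr (Nat.doubleFactorial_pos _).ne'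
      field_simp
      ring
    rw [heq] at hs
    have : Wf 0 z / z ^ (0+1) = Complex.sin z / z := by rw [Wf_zero]; norm_num
    rw [this]
    exact hs
  | 1, z, hz => by
    set f : ℕ → ℂ := fun m => (-1:ℂ)^m * z^(2*m+1) / ((2*m+1)! : ℂ)
      - z * ((-1:ℂ)^m * z^(2*m) / ((2*m)! : ℂ)) with hf
    have hs : HasSum f (Complex.sin z - z * Complex.cos z) :=
      (Complex.hasSum_sin z).sub ((Complex.hasSum_cos z).mul_left z)
    have hshift : HasSum (fun m => f (m+1)) (Complex.sin z - z * Complex.cos z) := by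
      have h0 : f 0 = 0 := by simp [hf]
      refine (hasSum_nat_add_iff 1).mpr ?_
      simpa [h0] using hs
    have heq : (fun m => f (m+1) / z^2) = fun m => term 1 m z := by
      funext m
      have na : (2*m+3)! = (2*m+3)*(2*m+2)*(2^m * m.factorial * (2*m+1)‼) := by
        have h1 : (2*m+3)! = (2*m+3) * (2*m+2)! := by
          rw [show (2*m+3) = (2*m+2)+1 by ring, Nat.factorial_succ]
        have h2 : (2*m+2)! = (2*m+2) * (2*m+1)! := by
          rw [show (2*m+2) = (2*m+1)+1 by ring, Nat.factorial_succ]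
        rw [h1, h2, fact_odd]; ring
      have nb : (2*m+2)! = (2*m+2)*(2^m * m.factorial * (2*m+1)‼) := by
        have h2 : (2*m+2)! = (2*m+2) * (2*m+1)! := by
          rw [show (2*m+2) = (2*m+1)+1 by ring, Nat.factorial_succ]
        rw [h2, fact_odd]
      have nd : (2*m+3)‼ = (2*m+3)*(2*m+1)‼ := by
        have := Nat.doubleFactorial_add_two (2*m+1)
        rw [show 2*m+1+2 = 2*m+3 by ring] at this
        exact this
      have ha : (((2*m+3)! : ℕ) : ℂ)
          = (2*(m:ℂ)+3)*(2*(m:ℂ)+2)*((2:ℂ)^m * (m.factorial : ℂ) * (((2*m+1)‼ : ℕ) : ℂ)) := by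
        push_cast [na]; ring
      have hb : (((2*m+2)! : ℕ) : ℂ)
          = (2*(m:ℂ)+2)*((2:ℂ)^m * (m.factorial : ℂ) * (((2*m+1)‼ : ℕ) : ℂ)) := by
        push_cast [nb]; ring
      have hd : (((2*m+3)‼ : ℕ) : ℂ) = (2*(m:ℂ)+3)*(((2*m+1)‼ : ℕ) : ℂ) := by
        push_cast [nd]; ring
      simp only [hf]
      unfold term
      rw [show 2*(m+1)+1 = 2*m+3 by ring, show 2*(m+1) = 2*m+2 by ring,
        show 2*1+2*m+1 = 2*m+3 by ring, show 1+2*m = 2*m+1 by ring, ha, hb, hd]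
      have d1 : (2:ℂ)^m ≠ 0 := pow_ne_zero _ two_ne_zero
      have d2 : (m.factorial : ℂ) ≠ 0 := Nat.cast_ne_zero.mpr m.factorial_ne_zero
      have d3 : (((2*m+1)‼ : ℕ) : ℂ) ≠ 0 := Nat.cast_ne_zero.mpr (Nat.doubleFactorial_pos _).ne'
      have d5 : (2*(m:ℂ)+2) ≠ 0 := by
        intro h
        have : ((2*m+2 : ℕ) : ℂ) = 0 := by push_cast; linear_combination h
        simpa using Nat.cast_eq_zero.mp this
      have d7 : (2*(m:ℂ)+3) ≠ 0 := by
        intro h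
        have : ((2*m+3 : ℕ) : ℂ) = 0 := by push_cast; linear_combination h
        simpa using Nat.cast_eq_zero.mp this
      linear_combination helper1 ((-1:ℂ)^m) (z^(2*m)) z ((2:ℂ)^m * (m.factorial:ℂ))
        (((2*m+1)‼ : ℕ) : ℂ) (2*(m:ℂ)+3) (2*(m:ℂ)+2) hz (mul_ne_zero d1 d2) d3 d7 d5 (by ring)
    have := hshift.div_const (z^2)
    rw [heq] at this
    have hW : Wf 1 z / z ^ (1+1) = (Complex.sin z - z * Complex.cos z) / z^2 := by
      rw [Wf_one]
    rw [hW]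
    exact this
  | (n+2), z, hz => by
    have ih0 := hasSum_W n z hz
    have ih1 := hasSum_W (n+1) z hz
    set f : ℕ → ℂ := fun m => ((2*(n:ℂ)+3)/z) * term (n+1) m z - term n m z with hf
    have hs : HasSum f ((2*(n:ℂ)+3)/z * (Wf (n+1) z / z^(n+2)) - Wf n z / z^(n+1)) :=
      (ih1.mul_left _).sub ih0
    have hsum_eq : (2*(n:ℂ)+3)/z * (Wf (n+1) z / z^(n+2)) - Wf n z / z^(n+1)
        = Wf (n+2) z / z^(n+3) := by
      rw [Wf_rec]
      field_simp
      ring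
    rw [hsum_eq] at hs
    have h0 : f 0 = 0 := by
      simp only [hf]
      unfold term
      have e1 : 2*(n+1)+2*0+1 = 2*n+3 := by ring
      have e2 : 2*n+2*0+1 = 2*n+1 := by ring
      rw [e1, e2]
      have hdf : (((2*n+3)‼ : ℕ) : ℂ) = (2*(n:ℂ)+3) * (((2*n+1)‼ : ℕ) : ℂ) := by
        have : (2*n+3)‼ = (2*n+3) * (2*n+1)‼ := by
          have := Nat.doubleFactorial_add_two (2*n+1)
          simpa [show 2*n+1+2 = 2*n+3 by ring] using this
        push_cast [this]; ring
      rw [hdf]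
      have d3 : (((2*n+1)‼ : ℕ) : ℂ) ≠ 0 := Nat.cast_ne_zero.mpr (Nat.doubleFactorial_pos _).ne'
      have d5 : (2*(n:ℂ)+3) ≠ 0 := by
        intro h
        have : ((2*n+3 : ℕ) : ℂ) = 0 := by push_cast; linear_combination h
        simpa using Nat.cast_eq_zero.mp this
      set v := ((Nat.doubleFactorial (2*n+1) : ℕ) : ℂ) with hv
      field_simp
      ring
    have hshift : HasSum (fun m => f (m+1)) (Wf (n+2) z / z^(n+3)) := by
      refine (hasSum_nat_add_iff 1).mpr ?_
      simpa [h0] using hs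
    have heq : (fun m => f (m+1)) = fun m => term (n+2) m z := by
      funext m
      simp only [hf]
      unfold term
      have e1 : 2*(n+1)+2*(m+1)+1 = 2*n+2*m+5 := by ring
      have e2 : 2*n+2*(m+1)+1 = 2*n+2*m+3 := by ring
      have e3 : 2*(n+2)+2*m+1 = 2*n+2*m+5 := by ring
      have e4 : (n+1)+2*(m+1) = n+2*m+3 := by ring
      have e5 : n+2*(m+1) = n+2*m+2 := by ring
      have e6 : (n+2)+2*m = n+2*m+2 := by ring
      rw [e1, e2, e3, e4, e5, e6]
      have hdf : (((2*n+2*m+5)‼ : ℕ) : ℂ)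
          = (2*(n:ℂ)+2*(m:ℂ)+5) * (((2*n+2*m+3)‼ : ℕ) : ℂ) := by
        have : (2*n+2*m+5)‼ = (2*n+2*m+5) * (2*n+2*m+3)‼ := by
          have := Nat.doubleFactorial_add_two (2*n+2*m+3)
          simpa [show 2*n+2*m+3+2 = 2*n+2*m+5 by ring] using this
        push_cast [this]; ring
      have hfacs : ((m+1).factorial : ℂ) = ((m:ℂ)+1) * (m.factorial : ℂ) := by
        rw [Nat.factorial_succ]; push_cast; ring
      rw [hdf, hfacs, pow_succ, pow_succ]
      have d1 : (2:ℂ)^m ≠ 0 := pow_ne_zero _ two_ne_zero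
      have d2 : (m.factorial : ℂ) ≠ 0 := Nat.cast_ne_zero.mpr m.factorial_ne_zero
      have d3 : (((2*n+2*m+3)‼ : ℕ) : ℂ) ≠ 0 := Nat.cast_ne_zero.mpr (Nat.doubleFactorial_pos _).ne'
      have d5 : (2*(n:ℂ)+2*(m:ℂ)+5) ≠ 0 := by
        intro h
        have : ((2*n+2*m+5 : ℕ) : ℂ) = 0 := by push_cast; linear_combination h
        simpa using Nat.cast_eq_zero.mp this
      have d6 : ((m:ℂ)+1) ≠ 0 := by
        intro h
        have : ((m+1 : ℕ) : ℂ) = 0 := by push_cast; linear_combination h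
        simpa using Nat.cast_eq_zero.mp this
      simp only [pow_succ]
      linear_combination helper2 ((-1:ℂ)^m) (z^(n+2*m+2)) z ((2:ℂ)^m * (m.factorial:ℂ))
        ((m:ℂ)+1) (2*(n:ℂ)+2*(m:ℂ)+5) (2*(n:ℂ)+3) (((2*n+2*m+3)‼ : ℕ) : ℂ)
        hz (mul_ne_zero d1 d2) d6 d5 d3 (by ring)
    rw [heq] at hshift
    have e : n+2+1 = n+3 := by omega
    rw [e]
    exact hshift

/-! ### Analysis layer -/

lemma sin_bound {A : ℝ} {z : ℂ} (him : |z.im| ≤ A) : ‖Complex.sin z‖ ≤ Real.exp A := by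
  have h1 : Complex.sin z = (Complex.exp (-z * Complex.I) - Complex.exp (z * Complex.I)) *
      Complex.I / 2 := rfl
  rw [h1, norm_div, norm_mul, Complex.norm_I, mul_one, Complex.norm_two]
  have h2 : ‖Complex.exp (-z * Complex.I) - Complex.exp (z * Complex.I)‖
      ≤ Real.exp A + Real.exp A := by
    refine (norm_sub_le _ _).trans (add_le_add ?_ ?_)
    · rw [Complex.norm_exp]
      refine Real.exp_le_exp.mpr ?_
      simp only [neg_mul, Complex.neg_re, Complex.mul_I_re]
      have := abs_le.mp him
      linarith
    · rw [Complex.norm_exp]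
      refine Real.exp_le_exp.mpr ?_
      simp only [Complex.mul_I_re]
      have := abs_le.mp him
      linarith
  linarith [h2]

lemma cos_bound {A : ℝ} {z : ℂ} (him : |z.im| ≤ A) : ‖Complex.cos z‖ ≤ Real.exp A := by
  have h1 : Complex.cos z = (Complex.exp (z * Complex.I) + Complex.exp (-z * Complex.I)) / 2 := rfl
  rw [h1, norm_div, Complex.norm_two]
  have h2 : ‖Complex.exp (z * Complex.I) + Complex.exp (-z * Complex.I)‖
      ≤ Real.exp A + Real.exp A := by
    refine (norm_add_le _ _).trans (add_le_add ?_ ?_)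
    · rw [Complex.norm_exp]
      refine Real.exp_le_exp.mpr ?_
      simp only [Complex.mul_I_re]
      have := abs_le.mp him
      linarith
    · rw [Complex.norm_exp]
      refine Real.exp_le_exp.mpr ?_
      simp only [neg_mul, Complex.neg_re, Complex.mul_I_re]
      have := abs_le.mp him
      linarith
  linarith [h2]

noncomputable def polyS (p : Polynomial ℂ) : ℝ :=
  ∑ i ∈ Finset.range (p.natDegree + 1), ‖p.coeff i‖

lemma polyS_nonneg (p : Polynomial ℂ) : 0 ≤ polyS p :=
  Finset.sum_nonneg fun i _ => norm_nonneg _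

lemma eval_le (p : Polynomial ℂ) {z : ℂ} (hz : 1 ≤ ‖z‖) {d : ℕ}
    (hd : p.natDegree ≤ d) : ‖p.eval z‖ ≤ polyS p * ‖z‖ ^ d := by
  rw [Polynomial.eval_eq_sum_range]
  refine (norm_sum_le _ _).trans ?_
  rw [polyS, Finset.sum_mul]
  refine Finset.sum_le_sum fun i hi => ?_
  rw [norm_mul, norm_pow]
  refine mul_le_mul_of_nonneg_left ?_ (norm_nonneg _)
  refine pow_le_pow_right₀ hz ?_
  have := Finset.mem_range.mp hi
  omega

noncomputable def trig (a b : Polynomial ℂ) (z : ℂ) : ℂ :=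
  a.eval z * Complex.sin z + b.eval z * Complex.cos z

lemma Wf_eq_trig (n : ℕ) (z : ℂ) : Wf n z = trig (pq n).1 (pq n).2 z := rfl

noncomputable def dA (a b : Polynomial ℂ) (k : ℕ) : Polynomial ℂ :=
  Polynomial.X * (Polynomial.derivative a - b) - (k : ℂ) • a

noncomputable def dB (a b : Polynomial ℂ) (k : ℕ) : Polynomial ℂ :=
  Polynomial.X * (Polynomial.derivative b + a) - (k : ℂ) • b

lemma deg_dA {a b : Polynomial ℂ} {d : ℕ} (ha : a.natDegree ≤ d) (hb : b.natDegree ≤ d) (k : ℕ) :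
    (dA a b k).natDegree ≤ d + 1 := by
  refine (Polynomial.natDegree_sub_le _ _).trans (max_le ?_ ?_)
  · refine (Polynomial.natDegree_mul_le).trans ?_
    have h1 : (Polynomial.X : Polynomial ℂ).natDegree ≤ 1 := Polynomial.natDegree_X_le
    have h2 : (Polynomial.derivative a - b).natDegree ≤ d :=
      (Polynomial.natDegree_sub_le _ _).trans
        (max_le ((Polynomial.natDegree_derivative_le a).trans (by omega)) hb)
    omega
  · exact (Polynomial.natDegree_smul_le _ _).trans (by omega)

lemma deg_dB {a b : Polynomial ℂ} {d : ℕ} (ha : a.natDegree ≤ d) (hb : b.natDegree ≤ d) (k : ℕ) :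
    (dB a b k).natDegree ≤ d + 1 := by
  refine (Polynomial.natDegree_sub_le _ _).trans (max_le ?_ ?_)
  · refine (Polynomial.natDegree_mul_le).trans ?_
    have h1 : (Polynomial.X : Polynomial ℂ).natDegree ≤ 1 := Polynomial.natDegree_X_le
    have h2 : (Polynomial.derivative b + a).natDegree ≤ d :=
      (Polynomial.natDegree_add_le _ _).trans
        (max_le ((Polynomial.natDegree_derivative_le b).trans (by omega)) ha)
    omega
  · exact (Polynomial.natDegree_smul_le _ _).trans (by omega)

lemma trigq_hasDerivAt (a b : Polynomial ℂ) (k : ℕ) {z : ℂ} (hz : z ≠ 0) :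
    HasDerivAt (fun w => trig a b w / w ^ (k+1))
      (trig (dA a b (k+1)) (dB a b (k+1)) z / z ^ (k+2)) z := by
  have h1 : HasDerivAt (fun w => trig a b w)
      ((Polynomial.derivative a).eval z * Complex.sin z + a.eval z * Complex.cos z
        + ((Polynomial.derivative b).eval z * Complex.cos z + b.eval z * (-Complex.sin z))) z :=
    ((a.hasDerivAt z).mul (Complex.hasDerivAt_sin z)).add
      ((b.hasDerivAt z).mul (Complex.hasDerivAt_cos z))
  have h2 : HasDerivAt (fun w : ℂ => w ^ (k+1)) (((k:ℂ)+1) * z ^ k) z := by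
    have := hasDerivAt_pow (k+1) z
    simpa using this
  have h3 := h1.div h2 (pow_ne_zero (k+1) hz)
  refine h3.congr_deriv ?_
  simp only [trig, dA, dB, Polynomial.eval_sub, Polynomial.eval_add, Polynomial.eval_mul,
    Polynomial.eval_smul, Polynomial.eval_X, smul_eq_mul]
  push_cast
  have hzk : (z : ℂ) ^ k ≠ 0 := pow_ne_zero _ hz
  field_simp
  ring

lemma trigq_bound (a b : Polynomial ℂ) (k d : ℕ) (hda : a.natDegree ≤ d) (hdb : b.natDegree ≤ d)
    (hdk : d ≤ k) {A : ℝ} {z : ℂ} (h1 : 1 ≤ ‖z‖) (him : |z.im| ≤ A) :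
    ‖trig a b z / z ^ k‖ ≤ (polyS a + polyS b) * Real.exp A := by
  rw [norm_div, norm_pow]
  have h4 : (0:ℝ) < ‖z‖ ^ k := by positivity
  rw [div_le_iff₀ h4]
  have h5 : ‖trig a b z‖ ≤ (polyS a + polyS b) * Real.exp A * ‖z‖ ^ d := by
    refine (norm_add_le _ _).trans ?_
    rw [norm_mul, norm_mul]
    have hsa := eval_le a h1 hda
    have hsb := eval_le b h1 hdb
    have hs := sin_bound him
    have hc := cos_bound him
    have e1 : ‖a.eval z‖ * ‖Complex.sin z‖
        ≤ (polyS a * ‖z‖ ^ d) * Real.exp A := by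
      exact mul_le_mul hsa hs (norm_nonneg _) (mul_nonneg (polyS_nonneg a) (by positivity))
    have e2 : ‖b.eval z‖ * ‖Complex.cos z‖
        ≤ (polyS b * ‖z‖ ^ d) * Real.exp A := by
      exact mul_le_mul hsb hc (norm_nonneg _) (mul_nonneg (polyS_nonneg b) (by positivity))
    nlinarith [polyS_nonneg a, polyS_nonneg b, Real.exp_pos A,
      pow_pos (lt_of_lt_of_le one_pos h1) d]
  refine h5.trans ?_
  have h6 : ‖z‖ ^ d ≤ ‖z‖ ^ k := pow_le_pow_right₀ h1 hdk
  have h7 : (0:ℝ) ≤ (polyS a + polyS b) * Real.exp A := by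
    have := polyS_nonneg a; have := polyS_nonneg b
    positivity
  exact mul_le_mul_of_nonneg_left h6 h7

lemma strip_bound {f : ℂ → ℂ} (hf : Continuous f) {A B : ℝ}
    (h : ∀ z : ℂ, 1 ≤ ‖z‖ → |z.im| ≤ A → ‖f z‖ ≤ B) :
    ∃ B' : ℝ, 0 ≤ B' ∧ ∀ z : ℂ, |z.im| ≤ A → ‖f z‖ ≤ B' := by
  obtain ⟨B0, hB0⟩ := (isCompact_closedBall (0:ℂ) 1).exists_bound_of_continuousOn
    hf.continuousOn
  refine ⟨max B (max B0 0), le_max_of_le_right (le_max_right _ _), fun z him => ?_⟩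
  rcases le_or_gt 1 (‖z‖) with hge | hlt
  · exact (h z hge him).trans (le_max_left _ _)
  · have hz : z ∈ Metric.closedBall (0:ℂ) 1 := by
      rw [Metric.mem_closedBall, Complex.dist_eq, sub_zero]
      exact hlt.le
    have := hB0 z hz
    exact this.trans (le_max_of_le_right (le_max_left _ _))

lemma entire_deriv {f : ℂ → ℂ} (hf : Differentiable ℂ f) : Differentiable ℂ (deriv f) := by
  have h : AnalyticOnNhd ℂ f Set.univ :=
    (hf.differentiableOn).analyticOnNhd isOpen_univ
  intro z
  exact (h.deriv z trivial).differentiableAt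

lemma sphJ_eq_s12 (n : ℕ) {z : ℂ} (hz : z ≠ 0) :
    sphJ n z = trig (pq n).1 (pq n).2 z / z ^ (n+1) := by
  have h2 := hasSum_W n z hz
  rw [Wf_eq_trig] at h2
  exact (hasSum_term n z).unique h2

lemma deriv_sphJ_eq (n : ℕ) {z : ℂ} (hz : z ≠ 0) :
    deriv (sphJ n) z
      = trig (dA (pq n).1 (pq n).2 (n+1)) (dB (pq n).1 (pq n).2 (n+1)) z / z ^ (n+2) := by
  have hev : sphJ n =ᶠ[nhds z] (fun w => trig (pq n).1 (pq n).2 w / w ^ (n+1)) := by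
    filter_upwards [IsOpen.mem_nhds isOpen_compl_singleton
      (by simpa using hz : z ∈ ({0}ᶜ : Set ℂ))] with w hw
    exact sphJ_eq_s12 n (by simpa using hw)
  exact ((trigq_hasDerivAt (pq n).1 (pq n).2 n hz).congr_of_eventuallyEq hev).deriv

lemma trig_add (p q r s : Polynomial ℂ) (z : ℂ) :
    trig (p + q) (r + s) z = trig p r z + trig q s z := by
  simp only [trig, Polynomial.eval_add]; ring

lemma calJ_eq (n : ℕ) {z : ℂ} (hz : z ≠ 0) :
    calJ n z = trig ((pq n).1 + dA (pq n).1 (pq n).2 (n+1))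
      ((pq n).2 + dB (pq n).1 (pq n).2 (n+1)) z / z ^ (n+1) := by
  unfold calJ
  rw [sphJ_eq_s12 n hz, deriv_sphJ_eq n hz, trig_add]
  have h1 : z ^ (n+1) ≠ 0 := pow_ne_zero _ hz
  have h2 : z ^ (n+2) ≠ 0 := pow_ne_zero _ hz
  field_simp
  ring

lemma gfun_eq (n : ℕ) {z : ℂ} (hz : z ≠ 0) :
    gfun n z = trig ((pq n).1 + dA (pq n).1 (pq n).2 (n+1))
      ((pq n).2 + dB (pq n).1 (pq n).2 (n+1)) z / z ^ (n+2) := by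
  unfold gfun
  rw [if_neg hz, calJ_eq n hz, div_div, ← pow_succ]

lemma sphJ_differentiableAlt (n : ℕ) : Differentiable ℂ (sphJ n) := sphJ_differentiable n

lemma calJ_diff (n : ℕ) : Differentiable ℂ (calJ n) := by
  unfold calJ
  exact (sphJ_differentiable n).add
    (differentiable_id.mul (entire_deriv (sphJ_differentiable n)))

lemma sphJ_zero_s12 {n : ℕ} (hn : 1 ≤ n) : sphJ n 0 = 0 := by
  unfold sphJ
  have h : ∀ m : ℕ, ((-1 : ℂ) ^ m * (0:ℂ) ^ (n + 2 * m)) /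
      ((2 : ℂ) ^ m * (m.factorial : ℂ) * (Nat.doubleFactorial (2 * n + 2 * m + 1) : ℂ)) = 0 := by
    intro m
    rw [zero_pow (by omega)]
    simp
  rw [tsum_congr h, tsum_zero]

lemma calJ_zero {n : ℕ} (hn : 1 ≤ n) : calJ n 0 = 0 := by
  unfold calJ
  rw [sphJ_zero_s12 hn]
  simp

lemma gfun_contAt {n : ℕ} (hn : 1 ≤ n) : ContinuousAt (gfun n) 0 := by
  have hd : HasDerivAt (calJ n) (deriv (calJ n) 0) 0 := (calJ_diff n 0).hasDerivAt
  have h1 : Filter.Tendsto (slope (calJ n) 0) (nhdsWithin 0 {(0:ℂ)}ᶜ)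
      (nhds (deriv (calJ n) 0)) := hasDerivAt_iff_tendsto_slope.mp hd
  have h2 : Filter.Tendsto (gfun n) (nhdsWithin 0 {(0:ℂ)}ᶜ) (nhds (gfun n 0)) := by
    have hev : ∀ w ∈ ({(0:ℂ)}ᶜ : Set ℂ), gfun n w = slope (calJ n) 0 w := by
      intro w hw
      have hw' : w ≠ 0 := by simpa using hw
      rw [slope_def_field, calJ_zero hn]
      unfold gfun
      rw [if_neg hw']
      field_simp
      ring
    have : gfun n 0 = deriv (calJ n) 0 := by unfold gfun; rw [if_pos rfl]
    rw [this]
    refine Filter.Tendsto.congr' ?_ h1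
    filter_upwards [self_mem_nhdsWithin] with w hw
    exact (hev w hw).symm
  have : nhdsWithin (0:ℂ) {(0:ℂ)}ᶜ ⊔ pure 0 = nhds 0 := nhdsNE_sup_pure 0
  unfold ContinuousAt
  rw [← this]
  exact h2.sup (tendsto_pure_nhds _ _)

lemma gfun_diff {n : ℕ} (hn : 1 ≤ n) : Differentiable ℂ (gfun n) := by
  intro z
  rcases eq_or_ne z 0 with rfl | hz
  · have hpunct : ∀ᶠ w in nhdsWithin (0:ℂ) {(0:ℂ)}ᶜ, DifferentiableAt ℂ (gfun n) w := by
      filter_upwards [self_mem_nhdsWithin] with w hw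
      have hw' : w ≠ 0 := by simpa using hw
      have hD : DifferentiableAt ℂ (fun u => calJ n u / u) w :=
        (calJ_diff n w).div differentiableAt_id hw'
      refine hD.congr_of_eventuallyEq ?_
      filter_upwards [IsOpen.mem_nhds isOpen_compl_singleton
        (by simpa using hw' : w ∈ ({0}ᶜ : Set ℂ))] with u hu
      unfold gfun
      rw [if_neg (by simpa using hu)]
    exact (Complex.analyticAt_of_differentiable_on_punctured_nhds_of_continuousAt hpunct
      (gfun_contAt hn)).differentiableAt
  · have hD : DifferentiableAt ℂ (fun u => calJ n u / u) z :=
      (calJ_diff n z).div differentiableAt_id hz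
    refine hD.congr_of_eventuallyEq ?_
    filter_upwards [IsOpen.mem_nhds isOpen_compl_singleton
      (by simpa using hz : z ∈ ({0}ᶜ : Set ℂ))] with u hu
    unfold gfun
    rw [if_neg (by simpa using hu)]

lemma deriv_gfun_eq (n : ℕ) {z : ℂ} (hz : z ≠ 0) :
    deriv (gfun n) z = trig
      (dA ((pq n).1 + dA (pq n).1 (pq n).2 (n+1)) ((pq n).2 + dB (pq n).1 (pq n).2 (n+1)) (n+2))
      (dB ((pq n).1 + dA (pq n).1 (pq n).2 (n+1)) ((pq n).2 + dB (pq n).1 (pq n).2 (n+1)) (n+2))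
      z / z ^ (n+3) := by
  have hev : gfun n =ᶠ[nhds z]
      (fun w => trig ((pq n).1 + dA (pq n).1 (pq n).2 (n+1))
        ((pq n).2 + dB (pq n).1 (pq n).2 (n+1)) w / w ^ (n+2)) := by
    filter_upwards [IsOpen.mem_nhds isOpen_compl_singleton
      (by simpa using hz : z ∈ ({0}ᶜ : Set ℂ))] with w hw
    exact gfun_eq n (by simpa using hw)
  have h := (trigq_hasDerivAt ((pq n).1 + dA (pq n).1 (pq n).2 (n+1))
      ((pq n).2 + dB (pq n).1 (pq n).2 (n+1)) (n+1) hz).congr_of_eventuallyEq hev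
  have e2 : n+1+1 = n+2 := rfl
  have e3 : n+1+2 = n+3 := rfl
  rw [e2, e3] at h
  exact h.deriv

lemma one_le_abs_ne_zero {z : ℂ} (h : 1 ≤ ‖z‖) : z ≠ 0 := by
  intro h0
  rw [h0] at h
  simp at h
  linarith

lemma derivJ_strip (n : ℕ) (M : ℝ) :
    ∃ K : ℝ, 0 ≤ K ∧ ∀ z : ℂ, |z.im| ≤ M → ‖deriv (sphJ n) z‖ ≤ K := by
  refine strip_bound
    (B := (polyS (dA (pq n).1 (pq n).2 (n+1)) + polyS (dB (pq n).1 (pq n).2 (n+1))) * Real.exp M)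
    (entire_deriv (sphJ_differentiable n)).continuous fun z h1 him => ?_
  rw [deriv_sphJ_eq n (one_le_abs_ne_zero h1)]
  exact trigq_bound _ _ (n+2) (n+1)
    (deg_dA (pq_deg n).1 (pq_deg n).2 _) (deg_dB (pq_deg n).1 (pq_deg n).2 _)
    (by omega) h1 him

lemma derivG_strip (n : ℕ) (hn : 1 ≤ n) (M : ℝ) :
    ∃ K : ℝ, 0 ≤ K ∧ ∀ z : ℂ, |z.im| ≤ M → ‖deriv (gfun n) z‖ ≤ K := by
  refine strip_bound
    (B := (polyS (dA ((pq n).1 + dA (pq n).1 (pq n).2 (n+1)) ((pq n).2 + dB (pq n).1 (pq n).2 (n+1)) (n+2))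
      + polyS (dB ((pq n).1 + dA (pq n).1 (pq n).2 (n+1)) ((pq n).2 + dB (pq n).1 (pq n).2 (n+1)) (n+2))) * Real.exp M)
    (entire_deriv (gfun_diff hn)).continuous fun z h1 him => ?_
  rw [deriv_gfun_eq n (one_le_abs_ne_zero h1)]
  have hC : ((pq n).1 + dA (pq n).1 (pq n).2 (n+1)).natDegree ≤ n+1 :=
    (Polynomial.natDegree_add_le _ _).trans
      (max_le ((pq_deg n).1.trans (by omega)) (deg_dA (pq_deg n).1 (pq_deg n).2 _))
  have hD : ((pq n).2 + dB (pq n).1 (pq n).2 (n+1)).natDegree ≤ n+1 :=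
    (Polynomial.natDegree_add_le _ _).trans
      (max_le ((pq_deg n).2.trans (by omega)) (deg_dB (pq_deg n).1 (pq_deg n).2 _))
  exact trigq_bound _ _ (n+3) (n+2) (deg_dA hC hD _) (deg_dB hC hD _) (by omega) h1 him

lemma main_est {f : ℂ → ℂ} (hdf : Differentiable ℂ f) {M K : ℝ}
    (hK : ∀ z : ℂ, |z.im| ≤ M → ‖deriv f z‖ ≤ K)
    {x y : ℂ} (hx : |x.im| ≤ M) (hy : |y.im| ≤ M) :
    ‖f x - f y‖ ≤ K * ‖x - y‖ := by
  have hconv : Convex ℝ {z : ℂ | |z.im| ≤ M} := by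
    have he : {z : ℂ | |z.im| ≤ M} = ⇑Complex.imLm ⁻¹' (Set.Icc (-M) M) := by
      ext w
      simp [abs_le, Complex.imLm]
    rw [he]
    exact (convex_Icc _ _).linear_preimage _
  have h := hconv.norm_image_sub_le_of_norm_deriv_le (f := f) (C := K)
    (fun w _ => hdf w) (fun w hw => by exact hK w hw) hy hx
  simpa using h

end Aux

/-- uniform `O(1/l)` comparison of `j_n(z_l t)` with `j_n(z̃_l t)` on `[0,1]`. -/
theorem stmt12 (n : ℕ) (hn : 1 ≤ n) (M C : ℝ) (hM : 0 < M) (hC : 0 < C) (z1 z2 : ℕ → ℂ) :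
    ((∀ l : ℕ, 1 ≤ l → |(z1 l).im| ≤ M ∧ ‖z1 l - zt1 n l‖ ≤ C / l) →
      ∃ C' > (0 : ℝ), ∀ l : ℕ, 1 ≤ l → ∀ t ∈ Set.Icc (0 : ℝ) 1,
        ‖sphJ n (z1 l * (t : ℂ)) - sphJ n (zt1 n l * (t : ℂ))‖ ≤ C' / l) ∧
    ((∀ l : ℕ, 1 ≤ l → |(z2 l).im| ≤ M ∧ ‖z2 l - zt2 n l‖ ≤ C / l) →
      ∃ C' > (0 : ℝ), ∀ l : ℕ, 1 ≤ l → ∀ t ∈ Set.Icc (0 : ℝ) 1,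
        ‖gfun n (z2 l * (t : ℂ)) - gfun n (zt2 n l * (t : ℂ))‖ ≤ C' / l) := by
  have key : ∀ (f : ℂ → ℂ) (zz : ℕ → ℂ) (w : ℕ → ℂ), Differentiable ℂ f →
      (∀ l, (w l).im = 0) →
      (∀ K : ℝ, 0 ≤ K → (∀ z : ℂ, |z.im| ≤ M → ‖deriv f z‖ ≤ K) →
        (∀ l : ℕ, 1 ≤ l → |(zz l).im| ≤ M ∧ ‖zz l - w l‖ ≤ C / l) →
        ∃ C' > (0 : ℝ), ∀ l : ℕ, 1 ≤ l → ∀ t ∈ Set.Icc (0 : ℝ) 1,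
          ‖f (zz l * (t : ℂ)) - f (w l * (t : ℂ))‖ ≤ C' / l) := by
    intro f zz w hdf hwim K hK0 hK h
    refine ⟨K * C + 1, by positivity, fun l hl t ht => ?_⟩
    obtain ⟨ht0, ht1⟩ := ht
    have hlp : (0:ℝ) < l := by exact_mod_cast hl
    have him1 : |(zz l * (t:ℂ)).im| ≤ M := by
      have he : (zz l * (t:ℂ)).im = (zz l).im * t := by
        simp [Complex.mul_im]
      rw [he, abs_mul, _root_.abs_of_nonneg ht0]
      have h1 := (h l hl).1
      nlinarith [abs_nonneg (zz l).im]
    have him2 : |(w l * (t:ℂ)).im| ≤ M := by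
      have he : (w l * (t:ℂ)).im = 0 := by
        rw [Complex.mul_im, hwim l]
        simp
      rw [he]
      simpa using hM.le
    have hmvt := main_est hdf hK him1 him2
    refine hmvt.trans ?_
    have he2 : zz l * (t:ℂ) - w l * (t:ℂ) = (zz l - w l) * (t:ℂ) := by ring
    rw [he2, norm_mul, Complex.norm_of_nonneg ht0]
    have h2 := (h l hl).2
    have h3 : ‖zz l - w l‖ * t ≤ C / l * 1 :=
      mul_le_mul h2 ht1 ht0 (by positivity)
    calc K * (‖zz l - w l‖ * t) ≤ K * (C / l * 1) :=
          mul_le_mul_of_nonneg_left h3 hK0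
      _ = K * C / l := by ring
      _ ≤ (K * C + 1) / l := by gcongr; linarith
  constructor
  · intro h
    obtain ⟨K, hK0, hK⟩ := derivJ_strip n M
    exact key (sphJ n) z1 (zt1 n) (sphJ_differentiable n)
      (fun l => by simp [zt1]) K hK0 hK h
  · intro h
    obtain ⟨K, hK0, hK⟩ := derivG_strip n hn M
    exact key (gfun n) z2 (zt2 n) (gfun_diff hn)
      (fun l => by simp [zt2]) K hK0 hK h
end

section
/- Let n ≥ 1 be an integer, μ ∈ ℂ, and λ ∈ ℂ with 0 < |λ − μ| < n/(n+1). Let J = J_n(μ) be the n×n Jordan block with eigenvalue μ. Then λI − J is invertible and its inverse satisfies the operator-norm bound ‖(λI − J)^{−1}‖₂ ≤ (n/(n+1))^n · (n+1) / |λ − μ|^n. -/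
open Complex Real Filter

/-- The `n×n` complex Jordan block with eigenvalue `μ`. -/
def jordanBlock (n : ℕ) (μ : ℂ) : Matrix (Fin n) (Fin n) ℂ :=
  Matrix.of fun i j => if i = j then μ else if (j : ℕ) = (i : ℕ) + 1 then 1 else 0

open Finset in
lemma core_ineq_s16 (n : ℕ) (hn : 1 ≤ n) (W : ℕ → ℝ) (hW : W n = 0) :
    ∑ j ∈ range n, (W j)^2 ≤
      (n:ℝ)^2 * ∑ j ∈ range n, (W j - (1 + 1/(n:ℝ)) * W (j+1))^2 := by
  have hn0 : (0:ℝ) < n := by exact_mod_cast hn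
  set s : ℝ := 1 + 1/(n:ℝ) with hs
  have hsn : (s - 1) * n = 1 := by rw [hs]; field_simp; ring
  have hs1 : 1 ≤ s := by
    have : 0 ≤ 1/(n:ℝ) := by positivity
    rw [hs]; linarith
  have shift : ∑ j ∈ range n, (W (j+1))^2 = ∑ j ∈ range n, (W j)^2 - (W 0)^2 := by
    have h1 := Finset.sum_range_succ' (fun j => W j ^ 2) n
    have h2 := Finset.sum_range_succ (fun j => W j ^ 2) n
    have h3 : W n ^ 2 = 0 := by rw [hW]; ring
    linarith [h1, h2, h3]
  have key : ∑ j ∈ range n, (W j - s * W (j+1))^2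
      = s * ∑ j ∈ range n, (W j - W (j+1))^2 + (s-1)^2 * ∑ j ∈ range n, (W j)^2
        - s*(s-1)*(W 0)^2 := by
    have per : ∀ j, (W j - s * W (j+1))^2
        = s * (W j - W (j+1))^2 + (1-s)*(W j)^2 + (s^2 - s)*(W (j+1))^2 := fun j => by ring
    simp_rw [per]
    rw [Finset.sum_add_distrib, Finset.sum_add_distrib, ← Finset.mul_sum, ← Finset.mul_sum,
      ← Finset.mul_sum, shift]
    ring
  have tele : W 0 = ∑ j ∈ range n, (W j - W (j+1)) := by
    rw [Finset.sum_range_sub' W n, hW, sub_zero]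
  have cs : (W 0)^2 ≤ (n:ℝ) * ∑ j ∈ range n, (W j - W (j+1))^2 := by
    rw [tele]
    have h := sq_sum_le_card_mul_sum_sq (s := range n) (f := fun j => W j - W (j+1))
    simpa using h
  set S : ℝ := ∑ j ∈ range n, (W j)^2 with hS
  set D : ℝ := ∑ j ∈ range n, (W j - W (j+1))^2 with hD'
  have hD : 0 ≤ D := Finset.sum_nonneg fun j _ => sq_nonneg _
  have hkey2 : (n:ℝ)^2 * ∑ j ∈ range n, (W j - s * W (j+1))^2
      = (n:ℝ)^2*s*D + S - (n:ℝ)^2*s*(s-1)*(W 0)^2 := by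
    rw [key]
    linear_combination (((s-1)*(n:ℝ)+1)*S) * hsn
  have hc : 0 ≤ (n:ℝ)^2*s*(s-1) := by
    apply mul_nonneg (mul_nonneg (by positivity) (by linarith)) (by linarith)
  have csmul : (n:ℝ)^2*s*(s-1)*(W 0)^2 ≤ (n:ℝ)^2*s*(s-1)*((n:ℝ)*D) :=
    mul_le_mul_of_nonneg_left cs hc
  have hzero : (n:ℝ)^2*s*D = (n:ℝ)^2*s*(s-1)*((n:ℝ)*D) := by
    linear_combination (-(n:ℝ)^2*s*D) * hsn
  linarith [hkey2, csmul, hzero]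

open Finset in
lemma seq_ineq (n : ℕ) (hn : 1 ≤ n) (r : ℝ) (hr : 0 < r)
    (hrc : r < (n:ℝ)/((n:ℝ)+1)) (a E : ℕ → ℝ)
    (ha0 : a n = 0) (hEnn : ∀ j, 0 ≤ E j) (hann : ∀ j, 0 ≤ a j)
    (hrec : ∀ j, j < n → r * a j ≤ E j + a (j+1)) :
    ∑ j ∈ range n, (a j)^2 ≤
      (((n:ℝ)/((n:ℝ)+1)/r)^n * ((n:ℝ)+1))^2 * ∑ j ∈ range n, (E j)^2 := by
  have hn0 : (0:ℝ) < n := by exact_mod_cast hn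
  set c : ℝ := (n:ℝ)/((n:ℝ)+1) with hc
  have hc0 : 0 < c := by positivity
  have hcinv : c⁻¹ = 1 + 1/(n:ℝ) := by rw [hc]; field_simp
  set w : ℕ → ℝ := fun j => ∑ k ∈ range n, if j ≤ k then c⁻¹^(k - j + 1) * E k else 0 with hw
  have hwnn : ∀ j, 0 ≤ w j := by
    intro j
    apply Finset.sum_nonneg
    intro k _
    split
    · exact mul_nonneg (pow_nonneg (inv_nonneg.2 hc0.le) _) (hEnn k)
    · exact le_refl 0
  have hwn : w n = 0 := by
    apply Finset.sum_eq_zero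
    intro k hk
    rw [mem_range] at hk
    rw [if_neg (by omega)]
  -- F1
  have F1 : ∀ j, c * w j - w (j+1) = if j < n then E j else 0 := by
    intro j
    have hcw : c * w j = ∑ k ∈ range n, if j ≤ k then c⁻¹^(k - j) * E k else 0 := by
      rw [hw]
      simp only []
      rw [Finset.mul_sum]
      apply Finset.sum_congr rfl
      intro k _
      split_ifs with h
      · rw [pow_succ]
        field_simp
      · ring
    rw [hcw, hw]
    simp only []
    rw [← Finset.sum_sub_distrib]
    have hterm : ∀ k ∈ range n,
        ((if j ≤ k then c⁻¹^(k - j) * E k else 0) - (if j+1 ≤ k then c⁻¹^(k - (j+1) + 1) * E k else 0))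
          = if k = j then E k else 0 := by
      intro k _
      rcases Nat.lt_trichotomy k j with h | h | h
      · rw [if_neg (by omega), if_neg (by omega), if_neg (by omega)]
        ring
      · subst h
        rw [if_pos le_rfl, if_neg (by omega), if_pos rfl, Nat.sub_self, pow_zero, one_mul]
        ring
      · rw [if_pos (by omega), if_pos (by omega), if_neg (by omega)]
        have : k - (j+1) + 1 = k - j := by omega
        rw [this]
        ring
    rw [Finset.sum_congr rfl hterm, Finset.sum_ite_eq' (range n) j E]
    simp [Finset.mem_range]
  -- backward induction
  have hcr1 : 1 ≤ c / r := (one_le_div hr).2 hrc.le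
  have F3 : ∀ m, m ≤ n → a (n - m) ≤ (c/r)^m * w (n - m) := by
    intro m
    induction m with
    | zero => intro _; simpa [ha0] using hwnn n
    | succ m ih =>
      intro hm
      have hmn : m ≤ n := by omega
      set j := n - (m+1) with hj
      have hjn : j < n := by omega
      have hj1 : j + 1 = n - m := by omega
      have hwj : c * w j = E j + w (j+1) := by
        have := F1 j
        rw [if_pos hjn] at this
        linarith
      have IH' : a (j+1) ≤ (c/r)^m * w (j+1) := by
        rw [hj1]
        exact ih hmn
      have hp : 1 ≤ (c/r)^m := by
        calc (1:ℝ) = 1^m := (one_pow m).symm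
          _ ≤ (c/r)^m := pow_le_pow_left₀ zero_le_one hcr1 m
      have step : r * a j ≤ (c/r)^m * (c * w j) := by
        rw [hwj]
        have h1 : r * a j ≤ E j + a (j+1) := hrec j hjn
        nlinarith [hEnn j, hwnn (j+1), hp, IH']
      have hrne : r ≠ 0 := ne_of_gt hr
      have : a j ≤ (c/r)^(m+1) * w j := by
        rw [pow_succ]
        rw [← mul_le_mul_iff_right₀ hr]
        calc r * a j ≤ (c/r)^m * (c * w j) := step
          _ = r * ((c/r)^m * (c/r) * w j) := by field_simp
      exact this
  have F3' : ∀ j, j < n → a j ≤ (c/r)^n * w j := by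
    intro j hj
    have h1 := F3 (n - j) (by omega)
    rw [show n - (n - j) = j by omega] at h1
    calc a j ≤ (c/r)^(n-j) * w j := h1
      _ ≤ (c/r)^n * w j := by
        apply mul_le_mul_of_nonneg_right _ (hwnn j)
        exact pow_le_pow_right₀ hcr1 (by omega)
  -- apply core
  have core := core_ineq_s16 n hn w hwn
  have hEc : ∑ j ∈ range n, (w j - (1 + 1/(n:ℝ)) * w (j+1))^2 = ∑ j ∈ range n, (E j / c)^2 := by
    apply Finset.sum_congr rfl
    intro j hj
    rw [mem_range] at hj
    have h1 := F1 j
    rw [if_pos hj] at h1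
    rw [← hcinv]
    congr 1
    field_simp
    linarith [h1]
  set K : ℝ := (c/r)^n with hK
  have hK0 : 0 ≤ K := by positivity
  calc ∑ j ∈ range n, (a j)^2 ≤ ∑ j ∈ range n, (K * w j)^2 := by
        apply Finset.sum_le_sum
        intro j hj
        rw [mem_range] at hj
        exact pow_le_pow_left₀ (hann j) (F3' j hj) 2
    _ = K^2 * ∑ j ∈ range n, (w j)^2 := by
        rw [Finset.mul_sum]
        apply Finset.sum_congr rfl
        intro j _
        ring
    _ ≤ K^2 * ((n:ℝ)^2 * ∑ j ∈ range n, (E j / c)^2) := by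
        apply mul_le_mul_of_nonneg_left _ (by positivity)
        rw [← hEc]
        exact core
    _ = (K * ((n:ℝ)+1))^2 * ∑ j ∈ range n, (E j)^2 := by
        rw [Finset.mul_sum, Finset.mul_sum, Finset.mul_sum]
        apply Finset.sum_congr rfl
        intro j _
        have hne : c ≠ 0 := ne_of_gt hc0
        have hn1 : (n:ℝ) + 1 ≠ 0 := by positivity
        rw [hc]
        field_simp

/-- operator-norm bound on the resolvent of a Jordan block for
`0 < |λ − μ| < n/(n+1)`. -/
theorem stmt16 (n : ℕ) (hn : 1 ≤ n) (μ lam : ℂ)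
    (h1 : 0 < ‖lam - μ‖) (h2 : ‖lam - μ‖ < (n : ℝ) / ((n : ℝ) + 1)) :
    ∃ B : Matrix (Fin n) (Fin n) ℂ,
      (lam • (1 : Matrix (Fin n) (Fin n) ℂ) - jordanBlock n μ) * B = 1 ∧
      B * (lam • (1 : Matrix (Fin n) (Fin n) ℂ) - jordanBlock n μ) = 1 ∧
      ∀ x : EuclideanSpace ℂ (Fin n),
        ‖Matrix.toEuclideanLin B x‖ ≤
          ((n : ℝ) / ((n : ℝ) + 1)) ^ n * ((n : ℝ) + 1) / (‖lam - μ‖) ^ n * ‖x‖ := by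
  set δ : ℂ := lam - μ with hδdef
  have hδ : δ ≠ 0 := fun h => by simp [h] at h1
  set Nm : Matrix (Fin n) (Fin n) ℂ := jordanBlock n 0 with hNm
  have hNapp : ∀ i k : Fin n, Nm i k = if (k:ℕ) = (i:ℕ) + 1 then (1:ℂ) else 0 := by
    intro i k
    show (if i = k then (0:ℂ) else if (k:ℕ) = (i:ℕ) + 1 then 1 else 0) = _
    rcases eq_or_ne ((k:ℕ)) ((i:ℕ)+1) with h | h
    · have hik : i ≠ k := fun e => by rw [e] at h; omega
      simp [h, hik]
    · simp [h]
  have hNpow : ∀ k (i j : Fin n), (Nm ^ k) i j = if (j:ℕ) = (i:ℕ) + k then (1:ℂ) else 0 := by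
    intro k
    induction k with
    | zero =>
      intro i j
      simp only [pow_zero, Matrix.one_apply, add_zero]
      rcases eq_or_ne i j with h | h
      · simp [h]
      · rw [if_neg h, if_neg]
        exact fun e => h (Fin.ext e.symm)
    | succ k ih =>
      intro i j
      rw [pow_succ, Matrix.mul_apply]
      by_cases h : (i:ℕ) + k < n
      · have hsum : ∀ l : Fin n, (Nm ^ k) i l * Nm l j
            = if l = (⟨(i:ℕ)+k, h⟩ : Fin n) then Nm l j else 0 := by
          intro l
          rw [ih]
          rcases eq_or_ne l (⟨(i:ℕ)+k, h⟩ : Fin n) with he | he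
          · rw [if_pos he, if_pos, one_mul]
            rw [he]
          · rw [if_neg he, if_neg, zero_mul]
            exact fun e => he (Fin.ext e)
        rw [Finset.sum_congr rfl (fun l _ => hsum l),
          Finset.sum_ite_eq' Finset.univ _ (fun l => Nm l j),
          if_pos (Finset.mem_univ _), hNapp]
        have hcond : ((j:ℕ) = (i:ℕ) + k + 1) ↔ ((j:ℕ) = (i:ℕ) + (k + 1)) := by omega
        simp only [hcond]
      · rw [Finset.sum_eq_zero, if_neg]
        · have := j.isLt; omega
        · intro l _
          rw [ih, if_neg, zero_mul]
          have := l.isLt; omega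
  have hNn : Nm ^ n = 0 := by
    ext i j
    rw [hNpow n i j, if_neg, Matrix.zero_apply]
    have := j.isLt; omega
  set X := (δ⁻¹ • Nm) with hX
  have hXn : X ^ n = 0 := by rw [hX, smul_pow, hNn, smul_zero]
  set G := ∑ k ∈ Finset.range n, X ^ k with hG
  have h2' := mul_geom_sum X n
  have h3' := geom_sum_mul X n
  rw [hXn] at h2' h3'
  have hGX : (1 - X) * G = 1 := by
    have e : (1 - X) * G = -((X - 1) * G) := by noncomm_ring
    rw [e, hG, h2']
    simp
  have hXG : G * (1 - X) = 1 := by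
    have e : G * (1 - X) = -(G * (X - 1)) := by noncomm_ring
    rw [e, hG, h3']
    simp
  have h0 : jordanBlock n μ = μ • (1 : Matrix (Fin n) (Fin n) ℂ) + Nm := by
    ext i j
    show (if i = j then μ else if (j:ℕ) = (i:ℕ) + 1 then 1 else 0) = _
    rw [Matrix.add_apply, Matrix.smul_apply, Matrix.one_apply, hNapp, smul_eq_mul]
    rcases eq_or_ne i j with h | h
    · rw [if_pos h, if_pos h, mul_one, if_neg, add_zero]
      subst h; omega
    · rw [if_neg h, if_neg h, mul_zero, zero_add]
  set A := lam • (1 : Matrix (Fin n) (Fin n) ℂ) - jordanBlock n μ with hA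
  have hAeq2 : A = δ • (1 : Matrix (Fin n) (Fin n) ℂ) - Nm := by
    rw [hA, h0, hδdef, sub_smul]
    abel
  have hAeq : A = δ • ((1 : Matrix (Fin n) (Fin n) ℂ) - X) := by
    rw [hAeq2, smul_sub, hX, smul_smul, mul_inv_cancel₀ hδ, one_smul]
  refine ⟨δ⁻¹ • G, ?_, ?_, ?_⟩
  · rw [hAeq, smul_mul_assoc, mul_smul_comm, smul_smul, mul_inv_cancel₀ hδ, one_smul, hGX]
  · rw [hAeq, mul_smul_comm, smul_mul_assoc, smul_smul, mul_inv_cancel₀ hδ, one_smul, hXG]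
  · intro x
    set B := δ⁻¹ • G with hB
    have hAB : A * B = 1 := by
      rw [hAeq, hB, smul_mul_assoc, mul_smul_comm, smul_smul, mul_inv_cancel₀ hδ, one_smul, hGX]
    set r : ℝ := ‖δ‖ with hr
    set y : Fin n → ℂ := fun i => x i with hy
    set v : Fin n → ℂ := Matrix.mulVec B y with hv
    have hAv : Matrix.mulVec A v = y := by
      rw [hv, Matrix.mulVec_mulVec, hAB, Matrix.one_mulVec]
    set V : ℕ → ℂ := fun j => if h : j < n then v ⟨j, h⟩ else 0 with hV
    set a : ℕ → ℝ := fun j => ‖V j‖ with ha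
    set E : ℕ → ℝ := fun j => if h : j < n then ‖y ⟨j, h⟩‖ else 0 with hE
    have hNmul : ∀ i : Fin n, (Matrix.mulVec Nm v) i = V ((i:ℕ)+1) := by
      intro i
      show ∑ k, Nm i k * v k = V ((i:ℕ)+1)
      by_cases h : (i:ℕ)+1 < n
      · have hterm : ∀ k : Fin n, Nm i k * v k
            = if k = (⟨(i:ℕ)+1, h⟩ : Fin n) then v k else 0 := by
          intro k
          rw [hNapp]
          rcases eq_or_ne k (⟨(i:ℕ)+1, h⟩ : Fin n) with he | he
          · rw [if_pos he, if_pos, one_mul]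
            rw [he]
          · rw [if_neg he, if_neg, zero_mul]
            exact fun e => he (Fin.ext e)
        rw [Finset.sum_congr rfl (fun k _ => hterm k),
          Finset.sum_ite_eq' Finset.univ _ v, if_pos (Finset.mem_univ _), hV]
        simp only [h, dif_pos]
      · rw [Finset.sum_eq_zero, hV]
        · simp [h]
        · intro k _
          rw [hNapp, if_neg, zero_mul]
          have := k.isLt; omega
    have hAmul : ∀ (j : ℕ) (hj : j < n), y ⟨j, hj⟩ = δ * V j - V (j+1) := by
      intro j hj
      conv_lhs => rw [← hAv]
      rw [hAeq2, Matrix.sub_mulVec, Matrix.smul_mulVec, Matrix.one_mulVec]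
      rw [Pi.sub_apply, Pi.smul_apply, smul_eq_mul, hNmul ⟨j, hj⟩]
      congr 1
      rw [hV]
      simp only [hj, dif_pos]
    have hrec : ∀ j, j < n → r * a j ≤ E j + a (j+1) := by
      intro j hj
      have h5 : δ * V j = y ⟨j, hj⟩ + V (j+1) := by rw [hAmul j hj]; ring
      have : r * a j = ‖δ * V j‖ := by rw [ha, hr, norm_mul]
      rw [this, h5, hE, ha]
      simp only [hj, dif_pos]
      exact norm_add_le _ _
    have ha0 : a n = 0 := by
      rw [ha, hV]
      simp
    have hEnn : ∀ j, 0 ≤ E j := by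
      intro j; rw [hE]; dsimp only; split
      · exact norm_nonneg _
      · exact le_refl 0
    have hann : ∀ j, 0 ≤ a j := fun j => norm_nonneg _
    have main := seq_ineq n hn r h1 h2 a E ha0 hEnn hann hrec
    have hsa : ∑ j ∈ Finset.range n, (a j)^2 = ∑ i : Fin n, ‖(Matrix.toEuclideanLin B x) i‖^2 := by
      rw [← Fin.sum_univ_eq_sum_range (fun j => (a j)^2) n]
      apply Finset.sum_congr rfl
      intro i _
      have h6 : (Matrix.toEuclideanLin B x) i = v i := rfl
      rw [h6, ha, hV]
      simp only [i.isLt, dif_pos, Fin.eta]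
    have hsE : ∑ j ∈ Finset.range n, (E j)^2 = ∑ i : Fin n, ‖x i‖^2 := by
      rw [← Fin.sum_univ_eq_sum_range (fun j => (E j)^2) n]
      apply Finset.sum_congr rfl
      intro i _
      rw [hE]
      simp only [i.isLt, dif_pos, Fin.eta]
      rfl
    set c : ℝ := (n:ℝ)/((n:ℝ)+1) with hc
    have hC0 : 0 ≤ (c/r)^n * ((n:ℝ)+1) := by positivity
    rw [EuclideanSpace.norm_eq, EuclideanSpace.norm_eq]
    have hCeq : c ^ n * ((n:ℝ)+1) / r ^ n = (c/r)^n * ((n:ℝ)+1) := by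
      rw [div_pow c r n, div_mul_eq_mul_div]
    rw [hCeq]
    calc Real.sqrt (∑ i : Fin n, ‖(Matrix.toEuclideanLin B x) i‖^2)
        ≤ Real.sqrt (((c/r)^n * ((n:ℝ)+1))^2 * ∑ i : Fin n, ‖x i‖^2) := by
          apply Real.sqrt_le_sqrt
          rw [← hsa, ← hsE]
          exact main
      _ = (c/r)^n * ((n:ℝ)+1) * Real.sqrt (∑ i : Fin n, ‖x i‖^2) := by
          rw [Real.sqrt_mul (sq_nonneg _), Real.sqrt_sq hC0]
end
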